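/- arXiv:2408.10606 — 3 statements merged into one kernel-verified Lean document; each statement's English description precedes it below -/
import Mathlib

section
/- Let Γ be a finite simple graph that is not complete and has a dominating vertex x. Then Γ is minimally edge connected if and only if x is the only dominating vertex of Γ and the graph Γ − {x} obtained by deleting x is regular. -/
/-- The degree of a vertex: the number of its neighbours. -/
noncomputable def gDeg {V : Type*} (G : SimpleGraph V) (v : V) : ℕ :=
  (G.neighborSet v).ncard

/-- The minimum degree of a graph. -/
noncomputable def minDeg {V : Type*} (G : SimpleGraph V) : ℕ :=
  sInf (Set.range (gDeg G))

/-- The edge connectivity: the minimum size of a set of edges whose removal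
disconnects the graph. -/
noncomputable def edgeConn {V : Type*} (G : SimpleGraph V) : ℕ :=
  sInf {n : ℕ | ∃ S : Set (Sym2 V), S ⊆ G.edgeSet ∧ S.ncard = n ∧
    ¬ (G.deleteEdges S).Connected}

/-- The vertex connectivity: the minimum size of a set of vertices whose removal
disconnects the graph or leaves a single vertex. -/
noncomputable def vertexConn {V : Type*} (G : SimpleGraph V) : ℕ :=
  sInf {n : ℕ | ∃ S : Set V, S.ncard = n ∧ Sᶜ.Nonempty ∧
    (¬ (G.induce Sᶜ).Preconnected ∨ Sᶜ.ncard = 1)}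

/-- A graph is minimally edge connected if deleting any edge decreases the
edge connectivity by one. -/
def MinEdgeConnected {V : Type*} (G : SimpleGraph V) : Prop :=
  ∀ e ∈ G.edgeSet, edgeConn (G.deleteEdges {e}) = edgeConn G - 1

/-- A graph is minimally connected if deleting any edge decreases the
vertex connectivity by one. -/
def MinConnected {V : Type*} (G : SimpleGraph V) : Prop :=
  ∀ e ∈ G.edgeSet, vertexConn (G.deleteEdges {e}) = vertexConn G - 1

/-- The power graph of a group: distinct `x, y` are adjacent iff one is a
natural power of the other. -/
def powerGraph (G : Type*) [Group G] : SimpleGraph G :=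
  SimpleGraph.fromRel (fun x y => ∃ m : ℕ, y = x ^ m)

/-- The enhanced power graph of a group: distinct `x, y` are adjacent iff they
lie in a common cyclic subgroup. -/
def enhancedPowerGraph (G : Type*) [Group G] : SimpleGraph G :=
  SimpleGraph.fromRel
    (fun x y => ∃ z : G, x ∈ Subgroup.zpowers z ∧ y ∈ Subgroup.zpowers z)

/-- The order superpower graph of a group: distinct `x, y` are adjacent iff the
order of one divides the order of the other. -/
def superpowerGraph (G : Type*) [Group G] : SimpleGraph G :=
  SimpleGraph.fromRel (fun x y => orderOf x ∣ orderOf y)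

section Helpers

open SimpleGraph

variable {V : Type*}

lemma gDeg_eq_filter [Fintype V] (G : SimpleGraph V) (v : V) [DecidablePred (G.Adj v ·)] :
    gDeg G v = (Finset.univ.filter (G.Adj v ·)).card := by
  classical
  rw [gDeg, Set.ncard_eq_toFinset_card']
  congr 1; ext w; simp only [Set.mem_toFinset, Finset.mem_filter, Finset.mem_univ, true_and, mem_neighborSet]

lemma gDeg_pos [Fintype V] (G : SimpleGraph V) {v w : V} (h : G.Adj v w) : 1 ≤ gDeg G v :=
  Set.ncard_pos (Set.toFinite _) |>.mpr ⟨w, h⟩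

lemma isolate_cut [Fintype V] (G : SimpleGraph V) (v w : V) (hvw : w ≠ v) :
    ∃ S : Set (Sym2 V), S ⊆ G.edgeSet ∧ S.ncard = gDeg G v ∧
      ¬ (G.deleteEdges S).Connected := by
  classical
  refine ⟨G.incidenceSet v, G.incidenceSet_subset v, ?_, ?_⟩
  · rw [gDeg, ← Nat.card_coe_set_eq, ← Nat.card_coe_set_eq]
    exact Nat.card_congr (G.incidenceSetEquivNeighborSet v)
  · intro hcon
    obtain ⟨p⟩ := hcon.preconnected v w
    cases p with
    | nil => exact hvw rfl
    | cons h q =>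
      rw [deleteEdges_adj] at h
      exact h.2 ⟨G.mem_edgeSet.2 h.1, Sym2.mem_mk_left _ _⟩

lemma edgeConn_le_gDeg [Fintype V] (G : SimpleGraph V) (v w : V) (hvw : w ≠ v) :
    edgeConn G ≤ gDeg G v := by
  obtain ⟨S, h1, h2, h3⟩ := isolate_cut G v w hvw
  exact Nat.sInf_le ⟨S, h1, h2, h3⟩

lemma cutset_nonempty [Fintype V] (G : SimpleGraph V) (v w : V) (hvw : w ≠ v) :
    {n : ℕ | ∃ S : Set (Sym2 V), S ⊆ G.edgeSet ∧ S.ncard = n ∧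
      ¬ (G.deleteEdges S).Connected}.Nonempty := by
  refine ⟨_, G.edgeSet, le_refl _, rfl, ?_⟩
  intro hcon
  obtain ⟨p⟩ := hcon.preconnected v w
  cases p with
  | nil => exact hvw rfl
  | cons h q => rw [deleteEdges_adj] at h; exact h.2 (G.mem_edgeSet.2 h.1)

lemma le_edgeConn [Fintype V] (G : SimpleGraph V) (δ : ℕ) (v w : V) (hvw : w ≠ v)
    (h : ∀ S : Set (Sym2 V), S ⊆ G.edgeSet → ¬ (G.deleteEdges S).Connected → δ ≤ S.ncard) :
    δ ≤ edgeConn G := by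
  obtain ⟨S, h1, h2, h3⟩ := Nat.sInf_mem (cutset_nonempty G v w hvw)
  exact le_trans (h S h1 h3) (le_of_eq h2)

lemma edgeConn_drop_le [Fintype V] (G : SimpleGraph V) (e : Sym2 V) (he : e ∈ G.edgeSet)
    (v w : V) (hvw : w ≠ v) :
    edgeConn G ≤ edgeConn (G.deleteEdges {e}) + 1 := by
  classical
  have hne := cutset_nonempty (G.deleteEdges {e}) v w hvw
  obtain ⟨S, hS1, hS2, hS3⟩ := Nat.sInf_mem hne
  have heS : e ∉ S := fun h => by
    have := hS1 h
    induction e with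
    | h p q =>
      rw [mem_edgeSet, deleteEdges_adj] at this
      exact this.2 rfl
  have hsub : S ∪ {e} ⊆ G.edgeSet := by
    intro f hf
    rcases hf with hf | hf
    · exact (SimpleGraph.edgeSet_subset_edgeSet.2 (SimpleGraph.deleteEdges_le _)) (hS1 hf)
    · rw [Set.mem_singleton_iff] at hf; subst hf; exact he
  refine Nat.sInf_le ⟨S ∪ {e}, hsub, ?_, ?_⟩
  · rw [Set.union_singleton, Set.ncard_insert_of_notMem heS (Set.toFinite _), hS2]; rfl
  · rw [show G.deleteEdges (S ∪ {e}) = (G.deleteEdges {e}).deleteEdges S by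
      rw [SimpleGraph.deleteEdges_deleteEdges]; rw [Set.union_comm]]
    exact hS3

lemma arith_helper (k d : ℕ) (h1 : 1 ≤ k) (h2 : k ≤ d) : d ≤ k * (d - (k - 1)) := by
  obtain ⟨m, rfl⟩ : ∃ m, k = m + 1 := ⟨k - 1, by omega⟩
  simp only [Nat.add_sub_cancel]
  have h3 : 1 ≤ d - m := by omega
  calc d = (d - m) + m := by omega
    _ ≤ (d - m) + m * (d - m) := Nat.add_le_add_left (Nat.le_mul_of_pos_right m h3) _
    _ = (m + 1) * (d - m) := by ring

lemma cut_lower [Fintype V] (G : SimpleGraph V) (δ : ℕ) (x u : V)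
    (hdeg : ∀ v, δ ≤ gDeg G v)
    (hx : ∀ w, w ≠ x → w ≠ u → G.Adj x w)
    (S : Set (Sym2 V)) (hS : S ⊆ G.edgeSet)
    (hdis : ¬ (G.deleteEdges S).Connected) :
    δ ≤ S.ncard := by
  classical
  set G' := G.deleteEdges S with hG'
  haveI : Nonempty V := ⟨x⟩
  have hpre : ¬ G'.Preconnected := fun h => hdis ⟨h⟩
  have hy : ∃ y, ¬ G'.Reachable x y := by
    by_contra h
    push_neg at h
    exact hpre fun a b => (h a).symm.trans (h b)
  obtain ⟨y, hy⟩ := hy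
  set A : Set V := {w | G'.Reachable x w} with hA
  have hxA : x ∈ A := Reachable.refl x
  have hyB : y ∉ A := hy
  have key : ∀ a ∈ A, ∀ b, b ∉ A → G.Adj a b → s(a, b) ∈ S := by
    intro a ha b hb hadj
    by_contra hs
    refine hb ?_
    have : G'.Adj a b := by rw [hG', deleteEdges_adj]; exact ⟨hadj, hs⟩
    exact Reachable.trans ha this.reachable
  set Bf : Finset V := Finset.univ.filter (· ∉ A) with hBf
  have hyBf : y ∈ Bf := by simp [hBf, hyB]
  set k := Bf.card with hk
  have hk1 : 1 ≤ k := Finset.card_pos.mpr ⟨y, hyBf⟩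
  set Sf : Finset (Sym2 V) := S.toFinite.toFinset with hSf
  have hcard : Sf.card = S.ncard := (Set.ncard_eq_toFinset_card _ _).symm
  rw [← hcard]
  rcases le_or_gt k δ with hkδ | hkδ
  · set P : Finset (V × V) := Finset.univ.filter
      (fun p => p.1 ∉ A ∧ p.2 ∈ A ∧ G.Adj p.1 p.2) with hP
    have hPle : P.card ≤ Sf.card := by
      apply Finset.card_le_card_of_injOn (fun p => s(p.1, p.2))
      · intro p hp
        simp only [hP, Finset.mem_coe, Finset.mem_filter] at hp
        simp only [hSf, Finset.mem_coe, Set.Finite.mem_toFinset]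
        have := key p.2 hp.2.2.1 p.1 hp.2.1 hp.2.2.2.symm
        rwa [Sym2.eq_swap] at this
      · intro p hp q hq hpq
        simp only [hP, Finset.mem_coe, Finset.mem_filter] at hp hq
        simp only [Sym2.eq_iff] at hpq
        rcases hpq with ⟨h1, h2⟩ | ⟨h1, h2⟩
        · exact Prod.ext h1 h2
        · exact absurd (h1 ▸ hq.2.2.1) hp.2.1
    have hsum : P.card = ∑ b ∈ Bf, (P.filter (fun p => p.1 = b)).card := by
      apply Finset.card_eq_sum_card_fiberwise
      intro p hp
      simp only [hP, Finset.mem_coe, Finset.mem_filter] at hp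
      simp [hBf, hp.2.1]
    have hfib : ∀ b ∈ Bf, δ - (k - 1) ≤ (P.filter (fun p => p.1 = b)).card := by
      intro b hb
      simp only [hBf, Finset.mem_filter] at hb
      set Nall : Finset V := Finset.univ.filter (G.Adj b ·) with hNall
      set Nb : Finset V := Nall.filter (· ∈ A) with hNb
      set NbB : Finset V := Nall.filter (· ∉ A) with hNbB
      have hsplit : Nb.card + NbB.card = Nall.card :=
        Finset.card_filter_add_card_filter_not (fun w => w ∈ A)
      have hNalld : δ ≤ Nall.card := by rw [hNall, ← gDeg_eq_filter]; exact hdeg b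
      have hNbB : NbB.card ≤ k - 1 := by
        have hsub : NbB ⊆ Bf.erase b := by
          intro w hw
          simp only [hNbB, hNall, Finset.mem_filter, Finset.mem_univ, true_and] at hw
          refine Finset.mem_erase.2 ⟨fun h => G.loopless.irrefl b (h ▸ hw.1), ?_⟩
          simp [hBf, hw.2]
        calc NbB.card ≤ (Bf.erase b).card := Finset.card_le_card hsub
          _ = k - 1 := by rw [Finset.card_erase_of_mem (by simp [hBf, hb.2])]
      have hNbf : Nb.card ≤ (P.filter (fun p => p.1 = b)).card := by
        have himg : Nb.image (fun w => (b, w)) ⊆ P.filter (fun p => p.1 = b) := by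
          intro p hp
          simp only [Finset.mem_image] at hp
          obtain ⟨w, hw, rfl⟩ := hp
          simp only [hNb, hNall, Finset.mem_filter, Finset.mem_univ, true_and] at hw
          exact Finset.mem_filter.2 ⟨Finset.mem_filter.2 ⟨Finset.mem_univ _, hb.2, hw.2, hw.1⟩, rfl⟩
        calc Nb.card = (Nb.image (fun w => (b, w))).card :=
              (Finset.card_image_of_injective _ (fun a a' h => by simpa using h)).symm
          _ ≤ _ := Finset.card_le_card himg
      omega
    have htot : k * (δ - (k - 1)) ≤ P.card := by
      rw [hsum]
      calc k * (δ - (k - 1)) = ∑ _b ∈ Bf, (δ - (k - 1)) := by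
            rw [Finset.sum_const, smul_eq_mul]
        _ ≤ _ := Finset.sum_le_sum hfib
    have harith : δ ≤ k * (δ - (k - 1)) := arith_helper k δ hk1 hkδ
    omega
  · have : (Bf.erase u).card ≤ Sf.card := by
      apply Finset.card_le_card_of_injOn (fun b => s(x, b))
      · intro b hb
        simp only [Finset.mem_coe, Finset.mem_erase, hBf, Finset.mem_filter, Finset.mem_univ, true_and] at hb
        have hbx : b ≠ x := fun h => hb.2 (h ▸ hxA)
        simp only [hSf, Finset.mem_coe, Set.Finite.mem_toFinset]
        exact key x hxA b hb.2 (hx b hbx hb.1)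
      · intro b hb b' hb' hbb
        simp only [Finset.mem_coe, Finset.mem_erase, hBf, Finset.mem_filter,
          Finset.mem_univ, true_and] at hb hb'
        simp only [Sym2.eq_iff] at hbb
        rcases hbb with ⟨-, h⟩ | ⟨h1, -⟩
        · exact h
        · exact absurd (h1 ▸ hxA) hb'.2
    have h2 : k - 1 ≤ (Bf.erase u).card := Finset.pred_card_le_card_erase
    omega

lemma ncard_diff_singleton_ge {α : Type*} (s : Set α) (hs : s.Finite) (a : α) :
    s.ncard - 1 ≤ (s \ {a}).ncard := by
  rcases em (a ∈ s) with h | h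
  · rw [Set.ncard_diff_singleton_of_mem h]
  · rw [Set.diff_singleton_eq_self h]; omega

lemma ndel_left (G : SimpleGraph V) (v q : V) :
    (G.deleteEdges {s(v, q)}).neighborSet v = G.neighborSet v \ {q} := by
  ext w
  simp only [mem_neighborSet, deleteEdges_adj, Set.mem_diff, Set.mem_singleton_iff]
  constructor
  · rintro ⟨h1, h2⟩
    exact ⟨h1, fun hq => h2 (by rw [hq])⟩
  · rintro ⟨h1, h2⟩
    refine ⟨h1, fun heq => ?_⟩
    rw [Sym2.eq_iff] at heq
    rcases heq with ⟨-, rfl⟩ | ⟨rfl, rfl⟩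
    · exact h2 rfl
    · exact G.loopless.irrefl _ h1

lemma ndel_of_ne (G : SimpleGraph V) (p q v : V) (hvp : v ≠ p) (hvq : v ≠ q) :
    (G.deleteEdges {s(p, q)}).neighborSet v = G.neighborSet v := by
  ext w
  simp only [mem_neighborSet, deleteEdges_adj, Set.mem_singleton_iff, Sym2.eq_iff]
  constructor
  · exact fun h => h.1
  · intro h
    refine ⟨h, ?_⟩
    rintro (⟨rfl, rfl⟩ | ⟨rfl, rfl⟩) <;> simp_all

lemma gDeg_del_endpoint [Fintype V] (G : SimpleGraph V) {v q : V} (h : G.Adj v q) :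
    gDeg (G.deleteEdges {s(v, q)}) v = gDeg G v - 1 := by
  simp only [gDeg]
  rw [ndel_left]
  have := Set.ncard_diff_singleton_add_one (show q ∈ G.neighborSet v from h)
    (Set.toFinite _)
  omega

lemma gDeg_del_ge [Fintype V] (G : SimpleGraph V) (p q v : V) :
    gDeg G v - 1 ≤ gDeg (G.deleteEdges {s(p, q)}) v := by
  simp only [gDeg]
  rcases eq_or_ne v p with rfl | hvp
  · rw [ndel_left]
    exact ncard_diff_singleton_ge _ (Set.toFinite _) _
  rcases eq_or_ne v q with rfl | hvq
  · rw [show s(p, v) = s(v, p) from Sym2.eq_swap, ndel_left]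
    exact ncard_diff_singleton_ge _ (Set.toFinite _) _
  · rw [ndel_of_ne G p q v hvp hvq]
    omega

lemma gDeg_dom [Fintype V] (G : SimpleGraph V) (x : V) (hdom : ∀ y : V, y ≠ x → G.Adj x y) :
    gDeg G x = Fintype.card V - 1 := by
  have : G.neighborSet x = {x}ᶜ := by
    ext w
    simp only [mem_neighborSet, Set.mem_compl_iff, Set.mem_singleton_iff]
    exact ⟨fun h => h.ne', fun h => hdom w h⟩
  rw [gDeg, this]
  have h2 := Set.ncard_add_ncard_compl ({x} : Set V)
  rw [Set.ncard_singleton, Nat.card_eq_fintype_card] at h2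
  omega

lemma gDeg_le_of_nonadj [Fintype V] (G : SimpleGraph V) {a b : V} (hab : a ≠ b)
    (h : ¬ G.Adj a b) : gDeg G a ≤ Fintype.card V - 2 := by
  have hsub : G.neighborSet a ⊆ ({a, b} : Set V)ᶜ := by
    intro w hw
    simp only [Set.mem_compl_iff, Set.mem_insert_iff, Set.mem_singleton_iff]
    rintro (rfl | rfl)
    · exact G.loopless.irrefl _ hw
    · exact h hw
  have h1 := Set.ncard_le_ncard hsub (Set.toFinite _)
  have h2 := Set.ncard_add_ncard_compl ({a, b} : Set V)
  rw [Set.ncard_pair hab, Nat.card_eq_fintype_card] at h2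
  rw [gDeg]
  omega

lemma gDeg_induce [Fintype V] (G : SimpleGraph V) (s : Set V) (v : s) :
    gDeg (G.induce s) v = (G.neighborSet ↑v ∩ s).ncard := by
  rw [gDeg, ← Set.ncard_image_of_injective _ (Subtype.val_injective)]
  congr 1
  ext w
  simp only [Set.mem_image, mem_neighborSet, comap_adj, Function.Embedding.coe_subtype,
    Set.mem_inter_iff]
  constructor
  · rintro ⟨⟨w', hw'⟩, hadj, rfl⟩
    exact ⟨hadj, hw'⟩
  · rintro ⟨hadj, hw⟩
    exact ⟨⟨w, hw⟩, hadj, rfl⟩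

lemma gDeg_induce_compl [Fintype V] (G : SimpleGraph V) (x : V)
    (hdom : ∀ y : V, y ≠ x → G.Adj x y) (v : ({x}ᶜ : Set V)) :
    gDeg (G.induce ({x}ᶜ : Set V)) v = gDeg G ↑v - 1 := by
  rw [gDeg_induce]
  have hvx : (↑v : V) ≠ x := v.2
  have : G.neighborSet ↑v ∩ ({x}ᶜ : Set V) = G.neighborSet ↑v \ {x} := by
    ext w; simp [Set.mem_diff]
  rw [this]
  have hx : x ∈ G.neighborSet ↑v := ((hdom ↑v hvx).symm : G.Adj ↑v x)
  have := Set.ncard_diff_singleton_add_one hx (Set.toFinite _)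
  rw [gDeg]
  omega

lemma del_edge_conn [Fintype V] (G : SimpleGraph V) (x u r t : V) (D : ℕ)
    (hminall : ∀ v, D ≤ gDeg G v)
    (hxr : x ≠ r) (hdr : gDeg G r = D) (hadj : G.Adj r t)
    (hxdom' : ∀ w, w ≠ x → w ≠ u → (G.deleteEdges {s(r, t)}).Adj x w) :
    edgeConn (G.deleteEdges {s(r, t)}) = D - 1 := by
  apply le_antisymm
  · calc edgeConn _ ≤ gDeg (G.deleteEdges {s(r, t)}) r := edgeConn_le_gDeg _ r x hxr
      _ = gDeg G r - 1 := gDeg_del_endpoint G hadj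
      _ = D - 1 := by rw [hdr]
  · apply le_edgeConn _ (D - 1) r x hxr
    intro S hS hdis
    apply cut_lower _ (D - 1) x u ?_ hxdom' S hS hdis
    intro w
    have h1 := gDeg_del_ge G r t w
    have h2 := hminall w
    omega

end Helpers

open SimpleGraph

/-- A non-complete finite simple graph `Γ` with a dominating vertex `x`
is minimally edge connected iff `x` is the only dominating vertex of `Γ` and
`Γ - {x}` is regular. -/
theorem stmt_0 {V : Type*} [Fintype V] (G : SimpleGraph V) (x : V)
    (hnc : G ≠ ⊤) (hdom : ∀ y : V, y ≠ x → G.Adj x y) :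
    MinEdgeConnected G ↔
      ((∀ z : V, (∀ y : V, y ≠ z → G.Adj z y) → z = x) ∧
        ∃ d : ℕ, ∀ v : ({x}ᶜ : Set V), gDeg (G.induce ({x}ᶜ : Set V)) v = d) := by
  classical
  haveI : Nonempty V := ⟨x⟩
  obtain ⟨a, b, hab, hnadj⟩ : ∃ a b : V, a ≠ b ∧ ¬ G.Adj a b := by
    by_contra h
    push_neg at h
    apply hnc
    ext p q
    simp only [top_adj]
    exact ⟨fun hpq => hpq.ne, fun hpq => h p q hpq⟩
  have hax : a ≠ x := by rintro rfl; exact hnadj (hdom b (Ne.symm hab))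
  have hbx : b ≠ x := by rintro rfl; exact hnadj ((hdom a hax).symm)
  set n := Fintype.card V with hn
  have hdx : gDeg G x = n - 1 := gDeg_dom G x hdom
  have hda : gDeg G a ≤ n - 2 := gDeg_le_of_nonadj G hab hnadj
  set T : Set ℕ := {m | ∃ v : V, v ≠ x ∧ gDeg G v = m} with hT
  have hTne : T.Nonempty := ⟨gDeg G a, a, hax, rfl⟩
  obtain ⟨v₀, hv₀x, hv₀⟩ := Nat.sInf_mem hTne
  set D := sInf T with hD
  have hmin : ∀ v : V, v ≠ x → D ≤ gDeg G v := fun v hv => Nat.sInf_le ⟨v, hv, rfl⟩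
  have hD1 : 1 ≤ D := by rw [← hv₀]; exact gDeg_pos G (hdom v₀ hv₀x).symm
  have hDa : D ≤ n - 2 := le_trans (hmin a hax) hda
  have hn1 : 1 ≤ n := Fintype.card_pos
  have hminall : ∀ v : V, D ≤ gDeg G v := by
    intro v
    rcases eq_or_ne v x with rfl | hvx
    · rw [hdx]; omega
    · exact hmin v hvx
  have hxv₀ : x ≠ v₀ := Ne.symm hv₀x
  have hEG : edgeConn G = D := by
    apply le_antisymm
    · calc edgeConn G ≤ gDeg G v₀ := edgeConn_le_gDeg G v₀ x hxv₀
        _ = D := hv₀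
    · exact le_edgeConn G D v₀ x hxv₀
        (fun S hS hdis => cut_lower G D x x hminall (fun w hw _ => hdom w hw) S hS hdis)
  constructor
  · intro hmec
    have hall : ∀ v : V, v ≠ x → gDeg G v = D := by
      intro v hvx
      by_contra hne
      have hgt : D + 1 ≤ gDeg G v := by
        have := hmin v hvx
        omega
      have he : s(x, v) ∈ G.edgeSet := G.mem_edgeSet.2 (hdom v hvx)
      have hval := hmec _ he
      rw [hEG] at hval
      have hlow : D ≤ edgeConn (G.deleteEdges {s(x, v)}) := by
        apply le_edgeConn _ D v₀ x hxv₀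
        intro S hS hdis
        apply cut_lower _ D x v ?_ ?_ S hS hdis
        · intro w
          rcases eq_or_ne w x with rfl | hwx
          · have := gDeg_del_ge G w v w
            rw [hdx] at this
            omega
          rcases eq_or_ne w v with rfl | hwv
          · have := gDeg_del_ge G x w w
            omega
          · have heq : gDeg (G.deleteEdges {s(x, v)}) w = gDeg G w := by
              simp only [gDeg]; rw [ndel_of_ne G x v w hwx hwv]
            rw [heq]; exact hmin w hwx
        · intro w hwx hwv
          rw [deleteEdges_adj]
          refine ⟨hdom w hwx, fun hcon => ?_⟩
          rw [Set.mem_singleton_iff, Sym2.eq_iff] at hcon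
          rcases hcon with ⟨-, h2⟩ | ⟨h1, -⟩
          · exact hwv h2
          · exact hvx h1.symm
      omega
    refine ⟨?_, D - 1, fun v => ?_⟩
    · -- uniqueness
      intro z hz
      by_contra hzx
      have he : s(x, z) ∈ G.edgeSet := G.mem_edgeSet.2 (hdom z hzx)
      have hval := hmec _ he
      rw [hEG] at hval
      have hlow : D ≤ edgeConn (G.deleteEdges {s(x, z)}) := by
        apply le_edgeConn _ D v₀ x hxv₀
        intro S hS hdis
        apply cut_lower _ D x z ?_ ?_ S hS hdis
        · intro w
          rcases eq_or_ne w x with rfl | hwx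
          · have := gDeg_del_ge G w z w
            rw [hdx] at this
            omega
          rcases eq_or_ne w z with rfl | hwz
          · have hdz : gDeg G w = n - 1 := gDeg_dom G w hz
            have := gDeg_del_ge G x w w
            rw [hdz] at this
            omega
          · have heq : gDeg (G.deleteEdges {s(x, z)}) w = gDeg G w := by
              simp only [gDeg]; rw [ndel_of_ne G x z w hwx hwz]
            rw [heq]; exact hmin w hwx
        · intro w hwx hwz
          rw [deleteEdges_adj]
          refine ⟨hdom w hwx, fun hcon => ?_⟩
          rw [Set.mem_singleton_iff, Sym2.eq_iff] at hcon
          rcases hcon with ⟨-, h2⟩ | ⟨h1, -⟩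
          · exact hwz h2
          · exact hzx h1.symm
      omega
    · -- regularity
      have hvx : (↑v : V) ≠ x := v.2
      rw [gDeg_induce_compl G x hdom v, hall ↑v hvx]
  · rintro ⟨-, d, hreg⟩
    have hall : ∀ v : V, v ≠ x → gDeg G v = d + 1 := by
      intro v hvx
      have h1 := hreg ⟨v, hvx⟩
      rw [gDeg_induce_compl G x hdom ⟨v, hvx⟩] at h1
      change gDeg G v - 1 = d at h1
      have h2 : 1 ≤ gDeg G v := gDeg_pos G (hdom v hvx).symm
      omega
    have hDd : D = d + 1 := by rw [← hv₀]; exact hall v₀ hv₀x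
    intro e he
    rw [hEG]
    revert he
    induction e using Sym2.ind with
    | _ p q =>
      intro he
      rw [mem_edgeSet] at he
      rcases eq_or_ne p x with rfl | hpx
      · -- e = s(x, q)
        have hqx : q ≠ p := he.ne'
        rw [show s(p, q) = s(q, p) from Sym2.eq_swap]
        apply del_edge_conn G p q q p D hminall (Ne.symm hqx)
          (by rw [hall q hqx, hDd]) he.symm
        intro w hwx hwq
        rw [deleteEdges_adj]
        refine ⟨hdom w hwx, fun hcon => ?_⟩
        rw [Set.mem_singleton_iff, Sym2.eq_iff] at hcon
        rcases hcon with ⟨h1, -⟩ | ⟨-, h2⟩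
        · exact hqx h1.symm
        · exact hwq h2
      rcases eq_or_ne q x with rfl | hqx
      · -- e = s(p, x)
        apply del_edge_conn G q p p q D hminall (Ne.symm hpx)
          (by rw [hall p hpx, hDd]) he
        intro w hwx hwp
        rw [deleteEdges_adj]
        refine ⟨hdom w hwx, fun hcon => ?_⟩
        rw [Set.mem_singleton_iff, Sym2.eq_iff] at hcon
        rcases hcon with ⟨h1, -⟩ | ⟨-, h2⟩
        · exact hpx h1.symm
        · exact hwp h2
      · -- x not an endpoint
        apply del_edge_conn G x x p q D hminall (Ne.symm hpx)
          (by rw [hall p hpx, hDd]) he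
        intro w hwx _
        rw [deleteEdges_adj]
        refine ⟨hdom w hwx, fun hcon => ?_⟩
        rw [Set.mem_singleton_iff, Sym2.eq_iff] at hcon
        rcases hcon with ⟨h1, -⟩ | ⟨h1, -⟩
        · exact hpx h1.symm
        · exact hqx h1.symm
end

section
/- A finite group G is a non-cyclic group of prime exponent if and only if the power graph P(G) is non-complete and minimally edge connected. -/
open SimpleGraph Set

section GraphBasics
variable {V : Type*}

lemma walk_closed (H : SimpleGraph V) (C : Set V)
    (hC : ∀ x y, x ∈ C → H.Adj x y → y ∈ C) :
    ∀ {u v : V}, H.Walk u v → u ∈ C → v ∈ C := by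
  intro u v w
  induction w with
  | nil => exact id
  | cons h p ih => intro hu; exact ih (hC _ _ hu h)

lemma reach_closed (H : SimpleGraph V) (C : Set V)
    (hC : ∀ x y, x ∈ C → H.Adj x y → y ∈ C) {u v : V}
    (h : H.Reachable u v) (hu : u ∈ C) : v ∈ C := by
  obtain ⟨w⟩ := h
  exact walk_closed H C hC w hu

lemma isolated_not_connected (H : SimpleGraph V) (x y : V) (hxy : y ≠ x)
    (hiso : ∀ z, ¬ H.Adj x z) : ¬ H.Connected := by
  intro hc
  refine hxy (reach_closed H {x} ?_ (hc.preconnected x y) rfl)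
  intro a b ha hab
  rw [Set.mem_singleton_iff] at ha
  subst ha
  exact absurd hab (hiso b)

lemma deleteEdges_incidence_isolated (H : SimpleGraph V) (x : V) :
    ∀ z, ¬ (H.deleteEdges (H.incidenceSet x)).Adj x z := by
  intro z h
  rw [SimpleGraph.deleteEdges_adj] at h
  exact h.2 ((H.mem_incidenceSet x z).2 h.1)

lemma ncard_incidenceSet (H : SimpleGraph V) (x : V) :
    (H.incidenceSet x).ncard = gDeg H x := by
  classical
  rw [gDeg, ← Nat.card_coe_set_eq, ← Nat.card_coe_set_eq]
  exact Nat.card_congr (H.incidenceSetEquivNeighborSet x)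

lemma incidence_cut_disconnects (H : SimpleGraph V) (x y : V) (hxy : y ≠ x) :
    ¬ (H.deleteEdges (H.incidenceSet x)).Connected :=
  isolated_not_connected _ x y hxy (deleteEdges_incidence_isolated H x)

lemma minDeg_exists (H : SimpleGraph V) [Nonempty V] :
    ∃ v, gDeg H v = minDeg H := by
  obtain ⟨v, hv⟩ := Nat.sInf_mem (Set.range_nonempty (gDeg H))
  exact ⟨v, hv⟩

lemma minDeg_le (H : SimpleGraph V) (v : V) : minDeg H ≤ gDeg H v :=
  Nat.sInf_le ⟨v, rfl⟩

lemma edgeConn_le_gDeg_s1 (H : SimpleGraph V) (x y : V) (hxy : y ≠ x) :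
    edgeConn H ≤ gDeg H x := by
  apply Nat.sInf_le
  exact ⟨H.incidenceSet x, H.incidenceSet_subset x, ncard_incidenceSet H x,
    incidence_cut_disconnects H x y hxy⟩

lemma edgeConn_le_minDeg (H : SimpleGraph V) [Nontrivial V] :
    edgeConn H ≤ minDeg H := by
  obtain ⟨v, hv⟩ := minDeg_exists H
  obtain ⟨y, hy⟩ := exists_ne v
  exact hv ▸ edgeConn_le_gDeg_s1 H v y hy

lemma edgeConn_set_nonempty (H : SimpleGraph V) [Nontrivial V] :
    {n : ℕ | ∃ S : Set (Sym2 V), S ⊆ H.edgeSet ∧ S.ncard = n ∧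
      ¬ (H.deleteEdges S).Connected}.Nonempty := by
  refine ⟨H.edgeSet.ncard, H.edgeSet, le_refl _, rfl, ?_⟩
  obtain ⟨x, y, hxy⟩ := exists_pair_ne V
  refine isolated_not_connected _ x y (Ne.symm hxy) ?_
  intro z h
  rw [SimpleGraph.deleteEdges_adj] at h
  exact h.2 h.1

end GraphBasics
section CutAnalysis
variable {V : Type*} [Finite V]

/-- the set of vertices unreachable from `v0` after deleting `T` -/
def unreach (H : SimpleGraph V) (v0 : V) (T : Set (Sym2 V)) : Set V :=
  {x | ¬ (H.deleteEdges T).Reachable v0 x}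

lemma v0_not_mem_unreach (H : SimpleGraph V) (v0 : V) (T : Set (Sym2 V)) :
    v0 ∉ unreach H v0 T := fun h => h (SimpleGraph.Reachable.refl v0)

lemma unreach_nonempty (H : SimpleGraph V) (v0 : V) (T : Set (Sym2 V))
    (hdis : ¬ (H.deleteEdges T).Connected) : (unreach H v0 T).Nonempty := by
  by_contra h
  rw [Set.not_nonempty_iff_eq_empty] at h
  apply hdis
  have hr : ∀ x, (H.deleteEdges T).Reachable v0 x := by
    intro x
    by_contra hx
    have : x ∈ unreach H v0 T := hx
    simp [h] at this
  haveI : Nonempty V := ⟨v0⟩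
  exact ⟨fun x y => (hr x).symm.trans (hr y)⟩

lemma crossing_mem (H : SimpleGraph V) (v0 : V) (T : Set (Sym2 V)) {a b : V}
    (ha : a ∈ unreach H v0 T) (hb : b ∉ unreach H v0 T) (hab : H.Adj b a) :
    s(b, a) ∈ T := by
  by_contra h
  have hb' : (H.deleteEdges T).Reachable v0 b := by simpa [unreach] using hb
  exact ha (hb'.trans (SimpleGraph.Adj.reachable (by rw [SimpleGraph.deleteEdges_adj]; exact ⟨hab, h⟩)))

lemma gDeg_le_cut_ncard (H : SimpleGraph V) (v0 : V) (T : Set (Sym2 V))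
    (hdom : ∀ x, x ≠ v0 → H.Adj v0 x) {a : V} (ha : a ∈ unreach H v0 T) :
    gDeg H a ≤ T.ncard := by
  classical
  set A := unreach H v0 T with hA
  have hv0A : v0 ∉ A := v0_not_mem_unreach H v0 T
  set F1 : Set (Sym2 V) := (fun c => s(v0, c)) '' (A \ {a}) with hF1
  set F2 : Set (Sym2 V) := (fun c => s(a, c)) '' (H.neighborSet a \ A) with hF2
  have hF1T : F1 ⊆ T := by
    rintro e ⟨c, ⟨hcA, hca⟩, rfl⟩
    have hcv0 : c ≠ v0 := fun h => hv0A (h ▸ hcA)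
    exact crossing_mem H v0 T hcA hv0A (hdom c hcv0)
  have hF2T : F2 ⊆ T := by
    rintro e ⟨c, ⟨hcN, hcA⟩, rfl⟩
    show s(a, c) ∈ T
    rw [Sym2.eq_swap]
    exact crossing_mem H v0 T ha hcA ((H.mem_neighborSet a c).1 hcN).symm
  have hav0 : a ≠ v0 := fun h => hv0A (h ▸ ha)
  have hdisj : Disjoint F1 F2 := by
    rw [Set.disjoint_left]
    rintro e ⟨c, ⟨hcA, hca⟩, rfl⟩ ⟨d, ⟨hdN, hdA⟩, he⟩
    rw [Sym2.eq_iff] at he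
    rcases he with ⟨h1, h2⟩ | ⟨h1, h2⟩
    · exact hav0 h1
    · exact hca (by simp [h1.symm])
  have hc1 : F1.ncard = (A \ {a}).ncard := by
    apply Set.ncard_image_of_injOn
    intro c1 _ c2 _ h
    rw [Sym2.eq_iff] at h
    rcases h with ⟨_, h⟩ | ⟨h1, h2⟩
    · exact h
    · exact h2.trans h1
  have hc2 : F2.ncard = (H.neighborSet a \ A).ncard := by
    apply Set.ncard_image_of_injOn
    intro c1 _ c2 _ h
    rw [Sym2.eq_iff] at h
    rcases h with ⟨_, h⟩ | ⟨h1, h2⟩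
    · exact h
    · exact h2.trans h1
  have hUT : F1 ∪ F2 ⊆ T := Set.union_subset hF1T hF2T
  have hle : F1.ncard + F2.ncard ≤ T.ncard := by
    rw [← Set.ncard_union_eq hdisj (Set.toFinite _) (Set.toFinite _)]
    exact Set.ncard_le_ncard hUT (Set.toFinite _)
  have hNA : (H.neighborSet a ∩ A).ncard ≤ (A \ {a}).ncard := by
    apply Set.ncard_le_ncard _ (Set.toFinite _)
    rintro c ⟨hcN, hcA⟩
    refine ⟨hcA, ?_⟩
    intro hc
    rw [Set.mem_singleton_iff] at hc
    subst hc
    exact H.irrefl hcN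
  have hdiff : (H.neighborSet a \ A).ncard = (H.neighborSet a).ncard - (H.neighborSet a ∩ A).ncard := by
    rw [show H.neighborSet a \ A = H.neighborSet a \ (H.neighborSet a ∩ A) by rw [Set.diff_self_inter]]
    exact Set.ncard_diff (Set.inter_subset_left) (Set.toFinite _)
  have hNAle : (H.neighborSet a ∩ A).ncard ≤ (H.neighborSet a).ncard :=
    Set.ncard_le_ncard Set.inter_subset_left (Set.toFinite _)
  rw [gDeg]
  rw [hc1, hc2, hdiff] at hle
  omega

lemma still_disconnected (H : SimpleGraph V) (v0 : V) (T : Set (Sym2 V)) (ε : Sym2 V)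
    {a0 : V} (ha0 : a0 ∈ unreach H v0 T)
    (hends : ∀ w, w ∈ ε → w ∉ unreach H v0 T) :
    ¬ (H.deleteEdges (T \ {ε})).Connected := by
  intro hc
  have hcl : ∀ x y, x ∈ (unreach H v0 T)ᶜ → (H.deleteEdges (T \ {ε})).Adj x y →
      y ∈ (unreach H v0 T)ᶜ := by
    intro x y hx hxy
    rw [SimpleGraph.deleteEdges_adj] at hxy
    by_cases hT : s(x, y) ∈ T
    · have : s(x, y) = ε := by
        by_contra hne
        exact hxy.2 ⟨hT, hne⟩
      exact hends y (this ▸ Sym2.mem_mk_right x y)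
    · rw [Set.mem_compl_iff] at hx ⊢
      have hx' : (H.deleteEdges T).Reachable v0 x := by simpa [unreach] using hx
      have hy' : (H.deleteEdges T).Reachable v0 y :=
        hx'.trans (SimpleGraph.Adj.reachable (by rw [SimpleGraph.deleteEdges_adj]; exact ⟨hxy.1, hT⟩))
      simpa [unreach] using hy'
  exact (reach_closed _ _ hcl (hc.preconnected v0 a0)
    (v0_not_mem_unreach H v0 T)) ha0

end CutAnalysis
section PG
variable {G : Type*} [Group G] [Fintype G]

/-- elements having `x` as a power -/
def Cset (x : G) : Set G := {z | x ∈ Subgroup.zpowers z}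

lemma pg_adj {x y : G} : (powerGraph G).Adj x y ↔
    x ≠ y ∧ (y ∈ Subgroup.zpowers x ∨ x ∈ Subgroup.zpowers y) := by
  rw [powerGraph, SimpleGraph.fromRel_adj]
  constructor
  · rintro ⟨hne, h | h⟩
    · exact ⟨hne, Or.inl (by obtain ⟨m, hm⟩ := h; exact mem_powers_iff_mem_zpowers.1 ⟨m, hm.symm⟩)⟩
    · exact ⟨hne, Or.inr (by obtain ⟨m, hm⟩ := h; exact mem_powers_iff_mem_zpowers.1 ⟨m, hm.symm⟩)⟩
  · rintro ⟨hne, h | h⟩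
    · obtain ⟨m, hm⟩ := mem_powers_iff_mem_zpowers.2 h
      exact ⟨hne, Or.inl ⟨m, hm.symm⟩⟩
    · obtain ⟨m, hm⟩ := mem_powers_iff_mem_zpowers.2 h
      exact ⟨hne, Or.inr ⟨m, hm.symm⟩⟩

lemma pg_adj_one {x : G} (hx : x ≠ 1) : (powerGraph G).Adj 1 x := by
  rw [pg_adj]
  exact ⟨fun h => hx h.symm, Or.inr (Subgroup.one_mem _)⟩

lemma pg_connected : (powerGraph G).Connected := by
  have hr : ∀ z : G, (powerGraph G).Reachable 1 z := by
    intro z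
    by_cases hz : z = 1
    · subst hz; exact SimpleGraph.Reachable.refl 1
    · exact (pg_adj_one hz).reachable
  exact ⟨fun x y => (hr x).symm.trans (hr y)⟩

lemma pg_neighborSet (x : G) : (powerGraph G).neighborSet x =
    ((Subgroup.zpowers x : Set G) ∪ Cset x) \ {x} := by
  ext z
  rw [SimpleGraph.mem_neighborSet, pg_adj]
  constructor
  · rintro ⟨hne, h⟩
    refine ⟨?_, ?_⟩
    · rcases h with h | h
      · exact Or.inl h
      · exact Or.inr h
    · intro hz
      rw [Set.mem_singleton_iff] at hz
      exact hne hz.symm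
  · rintro ⟨h, hz⟩
    rw [Set.mem_singleton_iff] at hz
    refine ⟨fun he => hz he.symm, ?_⟩
    rcases h with h | h
    · exact Or.inl h
    · exact Or.inr h

lemma deg_eq_min_of_minEdgeConnected [Nontrivial G]
    (hmin : MinEdgeConnected (powerGraph G)) {x : G} (hx : x ≠ 1) :
    gDeg (powerGraph G) x = minDeg (powerGraph G) := by
  classical
  set P := powerGraph G with hP
  have hdom : ∀ z : G, z ≠ (1 : G) → P.Adj 1 z := fun z hz => pg_adj_one hz
  set ε : Sym2 G := s((1 : G), x) with hε
  have hεE : ε ∈ P.edgeSet := (pg_adj_one hx)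
  have hne := edgeConn_set_nonempty P
  have hlammem := Nat.sInf_mem hne
  set lam := edgeConn P with hlam
  obtain ⟨S0, hS0E, hS0card, hS0dis⟩ := hlammem
  have hlampos : 1 ≤ lam := by
    rcases Nat.eq_zero_or_pos lam with h0 | h; swap
    · exact h
    · exfalso
      have hS0card2 : S0.ncard = lam := hS0card
      rw [h0, Set.ncard_eq_zero (Set.toFinite _)] at hS0card2
      rename' hS0card2 => hS0card
      rw [hS0card, SimpleGraph.deleteEdges_empty] at hS0dis
      exact hS0dis pg_connected
  have hmem2 := Nat.sInf_mem (edgeConn_set_nonempty (P.deleteEdges {ε}))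
  rw [← edgeConn, hmin ε hεE] at hmem2
  obtain ⟨S', hS'E, hS'card, hS'dis⟩ := hmem2
  have hεS' : ε ∉ S' := by
    intro h
    have := hS'E h
    rw [SimpleGraph.edgeSet_deleteEdges] at this
    exact this.2 rfl
  set T : Set (Sym2 G) := insert ε S' with hT
  have hTE : T ⊆ P.edgeSet := by
    rintro e (rfl | he)
    · exact hεE
    · exact ((SimpleGraph.edgeSet_deleteEdges {ε} ▸ hS'E) he).1
  have hTcard : T.ncard = lam := by
    rw [Set.ncard_insert_of_notMem hεS' (Set.toFinite _), hS'card]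
    omega
  have hTdis : ¬ (P.deleteEdges T).Connected := by
    rw [hT, Set.insert_eq, ← SimpleGraph.deleteEdges_deleteEdges]
    exact hS'dis
  set A := unreach P 1 T with hA
  have hAdeg : ∀ a ∈ A, gDeg P a = minDeg P := by
    intro a ha
    have h1 : gDeg P a ≤ T.ncard := gDeg_le_cut_ncard P 1 T hdom ha
    have h2 : minDeg P ≤ gDeg P a := minDeg_le P a
    have h3 : lam ≤ minDeg P := edgeConn_le_minDeg P
    omega
  have hxA : x ∈ A := by
    by_contra hxA
    obtain ⟨a0, ha0⟩ := unreach_nonempty P 1 T hTdis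
    have hends : ∀ w, w ∈ ε → w ∉ A := by
      intro w hw
      rw [hε, Sym2.mem_iff] at hw
      rcases hw with rfl | rfl
      · exact v0_not_mem_unreach P 1 T
      · exact hxA
    have hdis2 := still_disconnected P 1 T ε ha0 hends
    have hmemT : (T \ {ε}).ncard = lam - 1 := by
      rw [Set.ncard_diff_singleton_of_mem (Set.mem_insert ε S'), hTcard]
    have : lam - 1 ∈ {n : ℕ | ∃ S : Set (Sym2 G), S ⊆ P.edgeSet ∧ S.ncard = n ∧
        ¬ (P.deleteEdges S).Connected} :=
      ⟨T \ {ε}, (Set.diff_subset).trans hTE, hmemT, hdis2⟩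
    have hfin : lam ≤ lam - 1 := Nat.sInf_le this
    omega
  exact hAdeg x hxA

end PG
section GroupUtil
variable {G : Type*} [Group G] [Fintype G]

lemma ncard_zpowers (x : G) : (Subgroup.zpowers x : Set G).ncard = orderOf x := by
  rw [← Nat.card_coe_set_eq]
  exact Nat.card_zpowers x

lemma mem_zpowers_nat {x z : G} (h : z ∈ Subgroup.zpowers x) : ∃ m : ℕ, x ^ m = z := by
  obtain ⟨m, hm⟩ := mem_powers_iff_mem_zpowers.2 h
  exact ⟨m, hm⟩

lemma zpowers_eq_of_le_of_orderOf_le {x z : G} (h : Subgroup.zpowers x ≤ Subgroup.zpowers z)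
    (hord : orderOf z ≤ orderOf x) : Subgroup.zpowers x = Subgroup.zpowers z := by
  apply SetLike.coe_injective
  apply Set.eq_of_subset_of_ncard_le h
  rw [ncard_zpowers, ncard_zpowers]; exact hord

lemma exists_maximal_zpowers (x : G) : ∃ w : G, x ∈ Subgroup.zpowers w ∧
    ∀ v : G, w ∈ Subgroup.zpowers v → Subgroup.zpowers v = Subgroup.zpowers w := by
  haveI hne : Nonempty {z : G // x ∈ Subgroup.zpowers z} := ⟨⟨x, Subgroup.mem_zpowers x⟩⟩
  obtain ⟨⟨w, hw⟩, hmax⟩ := Finite.exists_max (α := {z : G // x ∈ Subgroup.zpowers z})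
    (fun z => orderOf z.1)
  refine ⟨w, hw, fun v hv => ?_⟩
  have hle : Subgroup.zpowers w ≤ Subgroup.zpowers v := Subgroup.zpowers_le.2 hv
  have hxv : x ∈ Subgroup.zpowers v := hle hw
  exact (zpowers_eq_of_le_of_orderOf_le hle (hmax ⟨v, hxv⟩)).symm

lemma zpowers_pow_gcd (w : G) (i : ℕ) :
    Subgroup.zpowers (w ^ i) = Subgroup.zpowers (w ^ Nat.gcd (orderOf w) i) := by
  apply le_antisymm
  · rw [Subgroup.zpowers_le]
    obtain ⟨k, hk⟩ := Nat.gcd_dvd_right (orderOf w) i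
    nth_rewrite 2 [hk]
    rw [pow_mul]
    exact Subgroup.pow_mem _ (Subgroup.mem_zpowers (w ^ Nat.gcd (orderOf w) i)) k
  · rw [Subgroup.zpowers_le]
    have hM : (w : G) ^ ((orderOf w : ℤ)) = 1 := by rw [zpow_natCast, pow_orderOf_eq_one]
    have key : w ^ (Nat.gcd (orderOf w) i) =
        (w ^ i) ^ (Nat.gcdB (orderOf w) i) := by
      have h1 : w ^ (Nat.gcd (orderOf w) i) = w ^ ((Nat.gcd (orderOf w) i : ℤ)) := by
        rw [zpow_natCast]
      rw [h1, Nat.gcd_eq_gcd_ab (orderOf w) i, zpow_add, zpow_mul, zpow_mul, hM, one_zpow,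
        one_mul, zpow_natCast]
    rw [key]
    exact Subgroup.zpow_mem _ (Subgroup.mem_zpowers (w ^ i)) _

/-- uniqueness of the order-q cyclic subgroup inside a cyclic subgroup -/
lemma zpowers_eq_of_orderOf_eq_prime {w u y : G} {q : ℕ}
    (hu : u ∈ Subgroup.zpowers w) (hy : y ∈ Subgroup.zpowers w)
    (hordu : orderOf u = q) (hordy : orderOf y = q) (hq : 2 ≤ q) :
    Subgroup.zpowers u = Subgroup.zpowers y := by
  have key : ∀ v : G, v ∈ Subgroup.zpowers w → orderOf v = q →
      Subgroup.zpowers v = Subgroup.zpowers (w ^ (orderOf w / q)) := by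
    intro v hv hord
    obtain ⟨i, hi⟩ := mem_zpowers_nat hv
    subst hi
    rw [zpowers_pow_gcd]
    have hM : orderOf (w ^ i) = orderOf w / Nat.gcd (orderOf w) i := orderOf_pow w
    have hgcd_dvd : Nat.gcd (orderOf w) i ∣ orderOf w := Nat.gcd_dvd_left _ _
    have hMpos : 0 < orderOf w := orderOf_pos w
    have : Nat.gcd (orderOf w) i = orderOf w / q := by
      have h2 : orderOf w / Nat.gcd (orderOf w) i = q := by rw [← hM, hord]
      have h3 : Nat.gcd (orderOf w) i * q = orderOf w := by
        rw [← h2]; exact Nat.mul_div_cancel' hgcd_dvd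
      have h4 := Nat.mul_div_cancel (m := Nat.gcd (orderOf w) i) (show 0 < q by omega)
      rw [h3] at h4
      omega
    rw [this]
  rw [key u hu hordu, key y hy hordy]

lemma orderOf_dvd_orderMax {g : G} (hmax : ∀ x : G, orderOf x ≤ orderOf g)
    (hreg_max : ∀ x : G, x ≠ 1 → (∃ w : G, x ∈ Subgroup.zpowers w ∧ orderOf w = orderOf g)) :
    ∀ x : G, orderOf x ∣ orderOf g := by
  intro x
  by_cases hx : x = 1
  · subst hx; simp
  · obtain ⟨w, hw, hord⟩ := hreg_max x hx
    exact hord ▸ orderOf_dvd_of_mem_zpowers hw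

end GroupUtil
section GroupCount
variable {G : Type*} [Group G] [Fintype G]

lemma one_not_mem_Cset {y : G} (hy : y ≠ 1) : (1:G) ∉ Cset y := by
  intro h
  rw [Cset, Set.mem_setOf_eq, Subgroup.zpowers_one_eq_bot, Subgroup.mem_bot] at h
  exact hy h

lemma gDeg_formula (x : G) : gDeg (powerGraph G) x =
    ((Subgroup.zpowers x : Set G) ∪ Cset x).ncard - 1 := by
  rw [gDeg, pg_neighborSet, Set.ncard_diff_singleton_of_mem
    (Set.mem_union_left _ (Subgroup.mem_zpowers x))]

lemma Cset_subset_of_maximal {w : G}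
    (hmax : ∀ v : G, w ∈ Subgroup.zpowers v → Subgroup.zpowers v = Subgroup.zpowers w) :
    Cset w ⊆ (Subgroup.zpowers w : Set G) := by
  intro z hz
  have := hmax z hz
  rw [← this]
  exact Subgroup.mem_zpowers z

lemma gDeg_maximal {w : G}
    (hmax : ∀ v : G, w ∈ Subgroup.zpowers v → Subgroup.zpowers v = Subgroup.zpowers w) :
    gDeg (powerGraph G) w = orderOf w - 1 := by
  rw [gDeg_formula, Set.union_eq_self_of_subset_right (Cset_subset_of_maximal hmax),
    ncard_zpowers]

lemma union_eq_insert_of_prime {y : G} {q : ℕ} (hy : y ≠ 1) (hq : orderOf y = q)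
    (hqp : q.Prime) :
    (Subgroup.zpowers y : Set G) ∪ Cset y = insert 1 (Cset y) := by
  ext z
  simp only [Set.mem_union, Set.mem_insert_iff]
  constructor
  · rintro (hz | hz)
    · by_cases h1 : z = 1
      · exact Or.inl h1
      · right
        have hdvd : orderOf z ∣ q := hq ▸ orderOf_dvd_of_mem_zpowers hz
        have hoz : orderOf z = q := by
          rcases (Nat.Prime.eq_one_or_self_of_dvd hqp _ hdvd) with h | h
          · exact absurd (orderOf_eq_one_iff.1 h) h1
          · exact h
        have heq : Subgroup.zpowers z = Subgroup.zpowers y :=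
          zpowers_eq_of_le_of_orderOf_le (Subgroup.zpowers_le.2 hz) (by omega)
        rw [Cset, Set.mem_setOf_eq, heq]
        exact Subgroup.mem_zpowers y
    · exact Or.inr hz
  · rintro (rfl | hz)
    · exact Or.inl (Subgroup.one_mem _)
    · exact Or.inr hz

lemma Cset_card_of_prime {y : G} {q M : ℕ} (hy : y ≠ 1) (hq : orderOf y = q)
    (hqp : q.Prime) (hdeg : gDeg (powerGraph G) y = M - 1) (hM : 2 ≤ M) :
    (Cset y).ncard = M - 1 := by
  have h1 := gDeg_formula y
  rw [union_eq_insert_of_prime hy hq hqp,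
    Set.ncard_insert_of_notMem (one_not_mem_Cset hy) (Set.toFinite _)] at h1
  omega

lemma cset_count {w y : G} {q a m' : ℕ} (hq : q.Prime) (hw : orderOf w = q ^ a * m')
    (hm' : ¬ q ∣ m') (ha : 1 ≤ a) (hy : y ∈ Subgroup.zpowers w) (hyq : orderOf y = q) :
    (Cset y ∩ (Subgroup.zpowers w : Set G)).ncard = q ^ a * m' - m' := by
  have hMpos : 0 < orderOf w := orderOf_pos w
  have hm'pos : 0 < m' := by
    rcases Nat.eq_zero_or_pos m' with h | h
    · rw [h, mul_zero] at hw; omega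
    · exact h
  have hqa_dvd : q ^ a ∣ orderOf w := hw ▸ dvd_mul_right _ _
  have hK_card : orderOf (w ^ q ^ a) = m' := by
    rw [orderOf_pow, Nat.gcd_eq_right hqa_dvd, hw,
      Nat.mul_div_cancel_left _ (Nat.pow_pos (n := a) hq.pos)]
  have hKsub : (Subgroup.zpowers (w ^ q ^ a) : Set G) ⊆ (Subgroup.zpowers w : Set G) :=
    Subgroup.zpowers_le.2 (Subgroup.pow_mem _ (Subgroup.mem_zpowers w) _)
  have claimA : ∀ z : G, z ∈ Subgroup.zpowers w → q ∣ orderOf z → y ∈ Subgroup.zpowers z := by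
    intro z hz hqz
    have hozpos : 0 < orderOf z := orderOf_pos z
    have hdvd : orderOf z / q ∣ orderOf z := Nat.div_dvd_of_dvd hqz
    have hz' : orderOf (z ^ (orderOf z / q)) = q := by
      rw [orderOf_pow, Nat.gcd_eq_right hdvd, Nat.div_div_self hqz (by omega)]
    have hz'mem : z ^ (orderOf z / q) ∈ Subgroup.zpowers w :=
      Subgroup.pow_mem _ hz _
    have heq := zpowers_eq_of_orderOf_eq_prime hz'mem hy hz' hyq hq.two_le
    have hy2 : y ∈ Subgroup.zpowers (z ^ (orderOf z / q)) := by
      rw [heq]; exact Subgroup.mem_zpowers y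
    exact Subgroup.zpowers_le.2 (Subgroup.pow_mem _ (Subgroup.mem_zpowers z) _) hy2
  have claimB : ∀ z : G, (z ∈ (Subgroup.zpowers w : Set G) ∧ y ∉ Subgroup.zpowers z) ↔
      z ∈ (Subgroup.zpowers (w ^ q ^ a) : Set G) := by
    intro z
    constructor
    · rintro ⟨hz, hyz⟩
      have hqz : ¬ q ∣ orderOf z := fun h => hyz (claimA z hz h)
      have hcop : Nat.Coprime (orderOf z) (q ^ a) :=
        (Nat.Coprime.pow_right a ((Nat.Prime.coprime_iff_not_dvd hq).2 hqz).symm)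
      have hdvdM : orderOf z ∣ q ^ a * m' := hw ▸ orderOf_dvd_of_mem_zpowers hz
      have hdvdm' : orderOf z ∣ m' := hcop.dvd_of_dvd_mul_left hdvdM
      obtain ⟨i, hi⟩ := mem_zpowers_nat hz
      have hpow : w ^ (i * m') = 1 := by
        rw [pow_mul, hi]
        exact orderOf_dvd_iff_pow_eq_one.1 hdvdm'
      have hMdvd : q ^ a * m' ∣ i * m' := by
        rw [← hw]
        exact orderOf_dvd_iff_pow_eq_one.2 hpow
      have hqa_i : q ^ a ∣ i := by
        rwa [Nat.mul_dvd_mul_iff_right hm'pos] at hMdvd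
      obtain ⟨k, hk⟩ := hqa_i
      rw [← hi, hk, pow_mul]
      exact Subgroup.pow_mem _ (Subgroup.mem_zpowers _) k
    · intro hzK
      have hz : z ∈ (Subgroup.zpowers w : Set G) := hKsub hzK
      have hozm' : orderOf z ∣ m' := hK_card ▸ orderOf_dvd_of_mem_zpowers hzK
      refine ⟨hz, fun hyz => ?_⟩
      have : q ∣ m' := (hyq ▸ orderOf_dvd_of_mem_zpowers hyz).trans hozm'
      exact hm' this
  have hseteq : Cset y ∩ (Subgroup.zpowers w : Set G) =
      (Subgroup.zpowers w : Set G) \ (Subgroup.zpowers (w ^ q ^ a) : Set G) := by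
    ext z
    constructor
    · rintro ⟨hzy, hz⟩
      refine ⟨hz, fun hK => ?_⟩
      exact ((claimB z).2 hK).2 hzy
    · rintro ⟨hz, hK⟩
      refine ⟨?_, hz⟩
      by_contra hyz
      exact hK ((claimB z).1 ⟨hz, hyz⟩)
  rw [hseteq, Set.ncard_diff hKsub (Set.toFinite _), ncard_zpowers, ncard_zpowers,
    hK_card, hw]

end GroupCount
section Arith

lemma arith_nonpp {M : ℕ} (hM : 2 ≤ M) (hnpp : ¬ ∃ p k, Nat.Prime p ∧ M = p ^ k) :
    ∃ q a m', Nat.Prime q ∧ M = q ^ a * m' ∧ ¬ q ∣ m' ∧ 1 ≤ a ∧ 2 ≤ m' ∧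
      4 * m' ≤ M + 3 := by
  have hM0 : M ≠ 0 := by omega
  have hne : M.primeFactors.Nonempty := Nat.nonempty_primeFactors.2 (by omega)
  obtain ⟨q, hqmem, hqmax⟩ := Finset.exists_max_image M.primeFactors
    (fun p => p ^ M.factorization p) hne
  obtain ⟨hqp, hqdvd, -⟩ := Nat.mem_primeFactors.1 hqmem
  set a := M.factorization q with hadef
  set m' := M / q ^ a with hm'def
  have hfact : q ^ a * m' = M := Nat.ordProj_mul_ordCompl_eq_self M q
  have hndvd : ¬ q ∣ m' := Nat.not_dvd_ordCompl hqp hM0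
  have ha : 1 ≤ a := hqp.factorization_pos_of_dvd hM0 hqdvd
  have hm'pos : 0 < m' := Nat.ordCompl_pos q hM0
  have hm'2 : 2 ≤ m' := by
    rcases Nat.lt_or_ge m' 2 with h | h
    · exfalso
      have hm1 : m' = 1 := by omega
      exact hnpp ⟨q, a, hqp, by rw [← hfact, hm1, mul_one]⟩
    · exact h
  refine ⟨q, a, m', hqp, hfact.symm, hndvd, ha, hm'2, ?_⟩
  by_cases hbig : 4 ≤ q ^ a
  · have h4 : 4 * m' ≤ q ^ a * m' := Nat.mul_le_mul_right _ hbig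
    omega
  · -- all prime power components are ≤ 3, force M = 6 and q ^ a = 3
    push_neg at hbig
    have hall : ∀ p ∈ M.primeFactors, p ^ M.factorization p ≤ 3 := by
      intro p hp
      exact le_trans (hqmax p hp) (by omega)
    have hdvd6 : M ∣ 6 := by
      rw [← Nat.factorization_le_iff_dvd hM0 (by norm_num : (6:ℕ) ≠ 0)]
      rw [Finsupp.le_iff]
      intro p hp
      have hp' : p ∈ M.primeFactors := by
        rwa [Nat.support_factorization] at hp
      obtain ⟨hpp, hpdvd, -⟩ := Nat.mem_primeFactors.1 hp'
      have hf1 : 1 ≤ M.factorization p := hpp.factorization_pos_of_dvd hM0 hpdvd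
      have hple : p ^ M.factorization p ≤ 3 := hall p hp'
      have hp2 : 2 ≤ p := hpp.two_le
      have hple3 : p ≤ 3 := by
        calc p = p ^ 1 := (pow_one p).symm
        _ ≤ p ^ M.factorization p := Nat.pow_le_pow_right (by omega) hf1
        _ ≤ 3 := hple
      have hfp1 : M.factorization p = 1 := by
        by_contra hne1
        have hf2 : 2 ≤ M.factorization p := by omega
        have : 4 ≤ p ^ M.factorization p := by
          calc (4:ℕ) = 2 ^ 2 := by norm_num
          _ ≤ p ^ 2 := Nat.pow_le_pow_left hp2 2
          _ ≤ p ^ M.factorization p := Nat.pow_le_pow_right (by omega) hf2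
        omega
      have hp23 : p = 2 ∨ p = 3 := by omega
      have h6dvd : p ∣ 6 := by rcases hp23 with rfl | rfl <;> norm_num
      have : 1 ≤ (6:ℕ).factorization p := hpp.factorization_pos_of_dvd (by norm_num) h6dvd
      omega
    have hM6 : M ≤ 6 := Nat.le_of_dvd (by norm_num) hdvd6
    have hMne : M = 6 := by
      interval_cases M
      · exact absurd (hnpp ⟨2, 1, by norm_num, by norm_num⟩) (fun h => h)
      · exact absurd (hnpp ⟨3, 1, by norm_num, by norm_num⟩) (fun h => h)
      · exfalso; norm_num at hdvd6
      · exfalso; norm_num at hdvd6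
      · rfl
    -- now q ^ a = 3, m' = 2
    have h3mem : 3 ∈ M.primeFactors := by
      rw [Nat.mem_primeFactors]
      exact ⟨by norm_num, by rw [hMne]; norm_num, hM0⟩
    have h3f : 1 ≤ M.factorization 3 :=
      (by norm_num : Nat.Prime 3).factorization_pos_of_dvd hM0 (by rw [hMne]; norm_num)
    have h3le : 3 ≤ q ^ a := by
      calc (3:ℕ) = 3 ^ 1 := by norm_num
      _ ≤ 3 ^ M.factorization 3 := Nat.pow_le_pow_right (by omega) h3f
      _ ≤ q ^ a := hqmax 3 h3mem
    have hqa3 : q ^ a = 3 := by omega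
    have : m' = 2 := by
      have := hfact
      rw [hqa3, hMne] at this
      omega
    omega

end Arith

section Cyclic
variable {G : Type*} [Group G] [Fintype G]

lemma mem_zpowers_of_orderOf_dvd {w u v : G} (hu : u ∈ Subgroup.zpowers w)
    (hv : v ∈ Subgroup.zpowers w) (h : orderOf u ∣ orderOf v) :
    u ∈ Subgroup.zpowers v := by
  obtain ⟨i, hi⟩ := mem_zpowers_nat hu
  obtain ⟨j, hj⟩ := mem_zpowers_nat hv
  have hMpos : 0 < orderOf w := orderOf_pos w
  set M := orderOf w with hMdef
  set d1 := Nat.gcd M i with hd1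
  set d2 := Nat.gcd M j with hd2
  have hd1M : d1 ∣ M := Nat.gcd_dvd_left _ _
  have hd2M : d2 ∣ M := Nat.gcd_dvd_left _ _
  have hou : orderOf u = M / d1 := by rw [← hi, orderOf_pow]
  have hov : orderOf v = M / d2 := by rw [← hj, orderOf_pow]
  have hdvd : M / d1 ∣ M / d2 := by rw [← hou, ← hov]; exact h
  have hd1pos : 0 < d1 := Nat.gcd_pos_of_pos_left _ hMpos
  have hd2pos : 0 < d2 := Nat.gcd_pos_of_pos_left _ hMpos
  have hq1 : d1 * (M / d1) = M := Nat.mul_div_cancel' hd1M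
  have hq2 : d2 * (M / d2) = M := Nat.mul_div_cancel' hd2M
  have hqpos : 0 < M / d1 := by
    rcases Nat.eq_zero_or_pos (M / d1) with h0 | h0
    · rw [h0, mul_zero] at hq1; omega
    · exact h0
  obtain ⟨k, hk⟩ := hdvd
  have hd21 : d2 ∣ d1 := by
    refine ⟨k, ?_⟩
    have : d1 * (M / d1) = d2 * k * (M / d1) := by
      rw [hq1]
      calc M = d2 * (M / d2) := hq2.symm
      _ = d2 * (M / d1 * k) := by rw [hk]
      _ = d2 * k * (M / d1) := by ring
    exact Nat.eq_of_mul_eq_mul_right hqpos this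
  obtain ⟨k', hk'⟩ := hd21
  have hmem : w ^ d1 ∈ Subgroup.zpowers (w ^ d2) := by
    rw [hk', pow_mul]
    exact Subgroup.pow_mem _ (Subgroup.mem_zpowers _) k'
  have h1 : Subgroup.zpowers u = Subgroup.zpowers (w ^ d1) := by
    rw [← hi, zpowers_pow_gcd]
  have h2 : Subgroup.zpowers v = Subgroup.zpowers (w ^ d2) := by
    rw [← hj, zpowers_pow_gcd]
  have : Subgroup.zpowers u ≤ Subgroup.zpowers v := by
    rw [h1, h2]
    exact Subgroup.zpowers_le.2 hmem
  exact this (Subgroup.mem_zpowers u)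

lemma all_in_cyclic_contra {w : G} (hall : ∀ x : G, x ∈ Subgroup.zpowers w)
    {q e : ℕ} (hq : q.Prime) (hords : ∀ x : G, orderOf x ∣ q ^ e)
    {u v : G} (huv : u ≠ v) (hnadj : ¬ (powerGraph G).Adj u v) : False := by
  obtain ⟨s, hs, hsu⟩ := (Nat.dvd_prime_pow hq).1 (hords u)
  obtain ⟨t, ht, htv⟩ := (Nat.dvd_prime_pow hq).1 (hords v)
  rcases le_total s t with hle | hle
  · have hdvd : orderOf u ∣ orderOf v := by
      rw [hsu, htv]; exact pow_dvd_pow q hle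
    exact hnadj (pg_adj.2 ⟨huv, Or.inr (mem_zpowers_of_orderOf_dvd (hall u) (hall v) hdvd)⟩)
  · have hdvd : orderOf v ∣ orderOf u := by
      rw [hsu, htv]; exact pow_dvd_pow q hle
    exact hnadj (pg_adj.2 ⟨huv, Or.inl (mem_zpowers_of_orderOf_dvd (hall v) (hall u) hdvd)⟩)

end Cyclic
section Backward
variable {G : Type*} [Group G] [Fintype G]

lemma orderOf_pow_div {x : G} {q : ℕ} (hq : 1 ≤ q) (h : q ∣ orderOf x) :
    orderOf (x ^ (orderOf x / q)) = q := by
  have hdvd : orderOf x / q ∣ orderOf x := Nat.div_dvd_of_dvd h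
  rw [orderOf_pow, Nat.gcd_eq_right hdvd, Nat.div_div_self h (orderOf_pos x).ne']

lemma prime_dvd_orderOf {x : G} {p k : ℕ} (hp : p.Prime) (hx : x ≠ 1)
    (h : orderOf x ∣ p ^ k) : p ∣ orderOf x := by
  obtain ⟨s, hs, hes⟩ := (Nat.dvd_prime_pow hp).1 h
  rcases Nat.eq_zero_or_pos s with h0 | h0
  · rw [h0, pow_zero] at hes
    exact absurd (orderOf_eq_one_iff.1 hes) hx
  · rw [hes]
    exact dvd_pow_self p h0.ne'

theorem backward_group [Nontrivial G]
    (hreg : ∀ x : G, x ≠ 1 → gDeg (powerGraph G) x = minDeg (powerGraph G))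
    {u v : G} (huv : u ≠ v) (hnadj : ¬ (powerGraph G).Adj u v) :
    ¬ IsCyclic G ∧ (Monoid.exponent G).Prime := by
  classical
  obtain ⟨g, hg⟩ := Finite.exists_max (fun x : G => orderOf x)
  set M := orderOf g with hMdef
  obtain ⟨x0, hx0⟩ := exists_ne (1 : G)
  have hx0ord : 2 ≤ orderOf x0 := by
    have h1 := orderOf_pos x0
    have h2 : orderOf x0 ≠ 1 := fun h => hx0 (orderOf_eq_one_iff.1 h)
    omega
  have hM2 : 2 ≤ M := le_trans hx0ord (hg x0)
  have hg1 : g ≠ 1 := by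
    intro h
    rw [h, orderOf_one] at hMdef
    omega
  have hmaxg : ∀ w : G, g ∈ Subgroup.zpowers w → Subgroup.zpowers w = Subgroup.zpowers g :=
    fun w hw => (zpowers_eq_of_le_of_orderOf_le (Subgroup.zpowers_le.2 hw) (hg w)).symm
  have hdelta : minDeg (powerGraph G) = M - 1 := by
    rw [← hreg g hg1, gDeg_maximal hmaxg]
  have hmaxM : ∀ x : G, x ≠ 1 → ∃ w, x ∈ Subgroup.zpowers w ∧ orderOf w = M ∧
      (∀ v : G, w ∈ Subgroup.zpowers v → Subgroup.zpowers v = Subgroup.zpowers w) := by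
    intro x hx
    obtain ⟨w, hxw, hmax⟩ := exists_maximal_zpowers x
    have hw1 : w ≠ 1 := by
      intro h
      rw [h, Subgroup.zpowers_one_eq_bot, Subgroup.mem_bot] at hxw
      exact hx hxw
    have h1 : gDeg (powerGraph G) w = orderOf w - 1 := gDeg_maximal hmax
    have h2 := hreg w hw1
    rw [hdelta, h1] at h2
    have h3 : 0 < orderOf w := orderOf_pos w
    have h4 : orderOf w ≤ M := hg w
    have h5 : orderOf w = M := by omega
    exact ⟨w, hxw, h5, hmax⟩
  have hdvdM : ∀ x : G, orderOf x ∣ M := by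
    intro x
    by_cases hx : x = 1
    · subst hx; simp
    · obtain ⟨w, hw, hord, -⟩ := hmaxM x hx
      exact hord ▸ orderOf_dvd_of_mem_zpowers hw
  have hCsetcard : ∀ (y : G) (q : ℕ), y ≠ 1 → Nat.Prime q → orderOf y = q →
      (Cset y).ncard = M - 1 := by
    intro y q h1 h2 h3
    exact Cset_card_of_prime h1 h3 h2 (by rw [hreg y h1, hdelta]) hM2
  -- Step 1 : M is a prime power
  have hpp : ∃ p k, Nat.Prime p ∧ M = p ^ k := by
    by_contra hnpp
    obtain ⟨q, a, m', hq, hMfact, hm', ha, hm'2, h43⟩ := arith_nonpp hM2 hnpp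
    have hqM : q ∣ M := by
      rw [hMfact]
      exact dvd_mul_of_dvd_left (dvd_pow_self q (by omega)) m'
    have hqa2 : q ≤ q ^ a := Nat.le_self_pow (by omega) q
    have hm'leM : 2 * m' ≤ M := by
      have h0 : 2 * m' ≤ q ^ a * m' := Nat.mul_le_mul_right _ (le_trans hq.two_le hqa2)
      calc 2 * m' ≤ q ^ a * m' := h0
      _ = M := hMfact.symm
    set y := g ^ (M / q) with hydef
    have hyord : orderOf y = q := orderOf_pow_div hq.pos hqM
    have hy1 : y ≠ 1 := by
      intro h
      rw [h, orderOf_one] at hyord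
      have := hq.two_le
      omega
    have hymem : y ∈ Subgroup.zpowers g := Subgroup.pow_mem _ (Subgroup.mem_zpowers g) _
    have hCy : (Cset y).ncard = M - 1 := hCsetcard y q hy1 hq hyord
    have hgord : orderOf g = q ^ a * m' := hMfact
    have hcount1 : (Cset y ∩ (Subgroup.zpowers g : Set G)).ncard = q ^ a * m' - m' :=
      cset_count hq hgord hm' ha hymem hyord
    have hex : ∃ z : G, z ∈ Cset y ∧ z ∉ (Subgroup.zpowers g : Set G) := by
      by_contra h
      push_neg at h
      have heq : Cset y ∩ (Subgroup.zpowers g : Set G) = Cset y :=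
        Set.inter_eq_self_of_subset_left (fun z hz => h z hz)
      rw [heq, hCy, ← hMfact] at hcount1
      omega
    obtain ⟨zst, hzstC, hzstout⟩ := hex
    have hzst1 : zst ≠ 1 := fun h => one_not_mem_Cset hy1 (h ▸ hzstC)
    obtain ⟨w2, hzw2, hw2ord, -⟩ := hmaxM zst hzst1
    have hyw2 : y ∈ Subgroup.zpowers w2 := (Subgroup.zpowers_le.2 hzw2) hzstC
    have hw2ord' : orderOf w2 = q ^ a * m' := by rw [hw2ord, hMfact]
    have hcount2 : (Cset y ∩ (Subgroup.zpowers w2 : Set G)).ncard = q ^ a * m' - m' :=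
      cset_count hq hw2ord' hm' ha hyw2 hyord
    set D := Subgroup.zpowers g ⊓ Subgroup.zpowers w2 with hDdef
    have hDg : (D : Set G) ⊆ (Subgroup.zpowers g : Set G) := by
      rw [hDdef, Subgroup.coe_inf]; exact Set.inter_subset_left
    have hDcard_eq : ((D : Set G)).ncard = Nat.card D := (Nat.card_coe_set_eq _).symm
    have hDdvd : Nat.card D ∣ M := by
      have h1 : Nat.card D ∣ Nat.card (Subgroup.zpowers g) := Subgroup.card_dvd_of_le inf_le_left
      rwa [Nat.card_zpowers] at h1
    have hDne : Nat.card D ≠ M := by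
      intro h
      have h1 : (D : Set G) = (Subgroup.zpowers g : Set G) := by
        apply Set.eq_of_subset_of_ncard_le hDg
        rw [hDcard_eq, h, ncard_zpowers]
      have hgD : g ∈ D := by
        have : g ∈ (D : Set G) := by rw [h1]; exact Subgroup.mem_zpowers g
        exact this
      have hgw2 : g ∈ Subgroup.zpowers w2 := (inf_le_right : D ≤ _) hgD
      have heq : Subgroup.zpowers g = Subgroup.zpowers w2 :=
        zpowers_eq_of_le_of_orderOf_le (Subgroup.zpowers_le.2 hgw2) (by rw [hw2ord])
      rw [← heq] at hzw2
      exact hzstout hzw2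
    have hD2 : 2 * Nat.card D ≤ M := by
      obtain ⟨c, hc⟩ := hDdvd
      have hc0 : c ≠ 0 := by
        intro h; rw [h, mul_zero] at hc; omega
      have hc1 : c ≠ 1 := by
        intro h; rw [h, mul_one] at hc; exact hDne hc.symm
      calc 2 * Nat.card D ≤ c * Nat.card D := Nat.mul_le_mul_right _ (by omega)
      _ = M := by rw [hc]; ring
    have hDpos : 1 ≤ Nat.card D := Nat.card_pos
    set S1 := Cset y ∩ (Subgroup.zpowers g : Set G) with hS1
    set S2 := Cset y ∩ (Subgroup.zpowers w2 : Set G) with hS2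
    have hIE := Set.ncard_inter_add_ncard_union S1 S2 (Set.toFinite _) (Set.toFinite _)
    have hUle : (S1 ∪ S2).ncard ≤ M - 1 := by
      rw [← hCy]
      exact Set.ncard_le_ncard (Set.union_subset Set.inter_subset_left Set.inter_subset_left)
        (Set.toFinite _)
    have hIsub : S1 ∩ S2 ⊆ (D : Set G) \ {1} := by
      rintro z ⟨⟨hz1, hz2⟩, ⟨hz3, hz4⟩⟩
      refine ⟨?_, ?_⟩
      · rw [hDdef, Subgroup.coe_inf]; exact ⟨hz2, hz4⟩
      · intro h
        rw [Set.mem_singleton_iff] at h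
        exact one_not_mem_Cset hy1 (h ▸ hz1)
    have hIle : (S1 ∩ S2).ncard ≤ Nat.card D - 1 := by
      have h1 : ((D : Set G) \ {1}).ncard = Nat.card D - 1 := by
        rw [Set.ncard_diff_singleton_of_mem (Subgroup.one_mem D), hDcard_eq]
      rw [← h1]
      exact Set.ncard_le_ncard hIsub (Set.toFinite _)
    rw [← hMfact] at hcount1 hcount2
    rw [hS1, hS2] at hIE hUle hIle
    rw [hcount1] at hIE
    rw [hcount2] at hIE
    omega
  obtain ⟨p, k, hp, hMpk⟩ := hpp
  have hords : ∀ x : G, orderOf x ∣ p ^ k := fun x => hMpk ▸ hdvdM x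
  have hk1 : 1 ≤ k := by
    rcases Nat.eq_zero_or_pos k with h | h
    · rw [h, pow_zero] at hMpk; omega
    · exact h
  -- intersection triviality of maximal cyclics
  have hj1 : ∀ w1 w2 : G, orderOf w1 = M → orderOf w2 = M →
      ∀ x : G, x ≠ 1 → x ∈ Subgroup.zpowers w1 → x ∈ Subgroup.zpowers w2 →
      Subgroup.zpowers w1 = Subgroup.zpowers w2 := by
    intro w1 w2 h1 h2 x hx hx1 hx2
    have hpx : p ∣ orderOf x := prime_dvd_orderOf hp hx (hords x)
    set y := x ^ (orderOf x / p) with hydef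
    have hyord : orderOf y = p := orderOf_pow_div hp.one_lt.le hpx
    have hy1 : y ≠ 1 := by
      intro h; rw [h, orderOf_one] at hyord; have := hp.two_le; omega
    have hyw1 : y ∈ Subgroup.zpowers w1 := Subgroup.pow_mem _ hx1 _
    have hyw2 : y ∈ Subgroup.zpowers w2 := Subgroup.pow_mem _ hx2 _
    have hCy : (Cset y).ncard = M - 1 := hCsetcard y p hy1 hp hyord
    have hw1ord : orderOf w1 = p ^ k * 1 := by rw [h1, hMpk, mul_one]
    have hcnt : (Cset y ∩ (Subgroup.zpowers w1 : Set G)).ncard = p ^ k * 1 - 1 :=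
      cset_count hp hw1ord (Nat.Prime.not_dvd_one hp) hk1 hyw1 hyord
    have hcnt' : (Cset y ∩ (Subgroup.zpowers w1 : Set G)).ncard = M - 1 := by
      rw [hcnt, mul_one, ← hMpk]
    have hsubeq : Cset y ∩ (Subgroup.zpowers w1 : Set G) = Cset y :=
      Set.eq_of_subset_of_ncard_le Set.inter_subset_left (by rw [hcnt', hCy])
        (Set.toFinite _)
    have hCsub : Cset y ⊆ (Subgroup.zpowers w1 : Set G) := by
      intro z hz
      rw [← hsubeq] at hz
      exact hz.2
    have hw2w1 : w2 ∈ Subgroup.zpowers w1 := hCsub hyw2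
    exact (zpowers_eq_of_le_of_orderOf_le (Subgroup.zpowers_le.2 hw2w1)
      (by rw [h1, h2])).symm
  -- Step 2 : k = 1
  have hMp : M = p := by
    by_cases hk2 : 2 ≤ k
    · exfalso
      haveI hFact : Fact p.Prime := ⟨hp⟩
      have hpg : IsPGroup p G := fun x => ⟨k, orderOf_dvd_iff_pow_eq_one.1 (hords x)⟩
      haveI := hpg.center_nontrivial
      obtain ⟨z0, hz0ne⟩ := exists_ne (1 : ↥(Subgroup.center G))
      have hz0G : (z0 : G) ≠ 1 := by
        intro h
        exact hz0ne (Subtype.ext h)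
      have hpz0 : p ∣ orderOf (z0 : G) := prime_dvd_orderOf hp hz0G (hords _)
      set z := (z0 : G) ^ (orderOf (z0 : G) / p) with hzdef
      have hzord : orderOf z = p := orderOf_pow_div hp.one_lt.le hpz0
      have hz1 : z ≠ 1 := by
        intro h; rw [h, orderOf_one] at hzord; have := hp.two_le; omega
      have hzcen : z ∈ Subgroup.center G := Subgroup.pow_mem _ z0.2 _
      obtain ⟨w1, hzw1, hw1ord, -⟩ := hmaxM z hz1
      have hex : ∃ x : G, x ≠ 1 ∧ x ∉ Subgroup.zpowers w1 := by
        by_contra h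
        push_neg at h
        have hall : ∀ x : G, x ∈ Subgroup.zpowers w1 := by
          intro x
          by_cases hx : x = 1
          · rw [hx]; exact Subgroup.one_mem _
          · exact h x hx
        exact all_in_cyclic_contra hall hp hords huv hnadj
      obtain ⟨vst, hvst1, hvstout⟩ := hex
      obtain ⟨w2, hvw2, hw2ord, -⟩ := hmaxM vst hvst1
      have hZne : Subgroup.zpowers w1 ≠ Subgroup.zpowers w2 := by
        intro h
        rw [← h] at hvw2
        exact hvstout hvw2
      have hcomm : Commute w2 z := Subgroup.mem_center_iff.1 hzcen w2
      have htq : w2 ^ p ≠ 1 := by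
        intro h
        have hdvd := orderOf_dvd_iff_pow_eq_one.2 h
        rw [hw2ord, hMpk] at hdvd
        have hle : p ^ k ≤ p := Nat.le_of_dvd hp.pos hdvd
        have h2 : p ^ 2 ≤ p ^ k := Nat.pow_le_pow_right hp.pos hk2
        have h3 : p * p = p ^ 2 := by ring
        have h4 : p * 2 ≤ p * p := Nat.mul_le_mul_left _ hp.two_le
        omega
      have hu1 : w2 * z ≠ 1 := by
        intro h
        have hzinv : w2⁻¹ = z := inv_eq_of_mul_eq_one_right h
        have hzw2 : z ∈ Subgroup.zpowers w2 := hzinv ▸ Subgroup.inv_mem _ (Subgroup.mem_zpowers w2)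
        exact hZne (hj1 w1 w2 hw1ord hw2ord z hz1 hzw1 hzw2)
      obtain ⟨w3, huw3, hw3ord, -⟩ := hmaxM (w2 * z) hu1
      have hzp : z ^ p = 1 := by
        rw [← hzord]; exact pow_orderOf_eq_one z
      have hupow : (w2 * z) ^ p = w2 ^ p := by
        rw [hcomm.mul_pow, hzp, mul_one]
      have htpw3 : w2 ^ p ∈ Subgroup.zpowers w3 := by
        rw [← hupow]
        exact Subgroup.pow_mem _ huw3 p
      have htpw2 : w2 ^ p ∈ Subgroup.zpowers w2 :=
        Subgroup.pow_mem _ (Subgroup.mem_zpowers w2) p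
      have h32 : Subgroup.zpowers w3 = Subgroup.zpowers w2 :=
        hj1 w3 w2 hw3ord hw2ord (w2 ^ p) htq htpw3 htpw2
      have huw2 : w2 * z ∈ Subgroup.zpowers w2 := h32 ▸ huw3
      have hzw2 : z ∈ Subgroup.zpowers w2 := by
        have hzeq : z = w2⁻¹ * (w2 * z) := by group
        rw [hzeq]
        exact Subgroup.mul_mem _ (Subgroup.inv_mem _ (Subgroup.mem_zpowers w2)) huw2
      exact hZne (hj1 w1 w2 hw1ord hw2ord z hz1 hzw1 hzw2)
    · have hk : k = 1 := by omega
      rw [hk, pow_one] at hMpk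
      exact hMpk
  -- conclusion
  have hexp : Monoid.exponent G = p := by
    apply Nat.dvd_antisymm
    · apply Monoid.exponent_dvd_of_forall_pow_eq_one
      intro x
      exact orderOf_dvd_iff_pow_eq_one.1 (hMp ▸ hdvdM x)
    · have h1 : orderOf g ∣ Monoid.exponent G := Monoid.order_dvd_exponent g
      rwa [← hMdef, hMp] at h1
  refine ⟨?_, by rw [hexp]; exact hp⟩
  intro hcyc
  obtain ⟨w, hw⟩ := hcyc.exists_generator
  refine all_in_cyclic_contra hw hp (e := 1) ?_ huv hnadj
  intro x
  rw [pow_one, ← hMp]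
  exact hdvdM x

end Backward
section Forward
variable {G : Type*} [Group G] [Fintype G]

lemma Cset_subset_of_prime_exp (hpe : ∀ x : G, x ≠ 1 → orderOf x = (Monoid.exponent G))
    {x : G} (hx : x ≠ 1) : Cset x ⊆ (Subgroup.zpowers x : Set G) := by
  intro z hz
  have hxz : x ∈ Subgroup.zpowers z := hz
  by_cases hz1 : z = 1
  · subst hz1
    rw [Subgroup.zpowers_one_eq_bot, Subgroup.mem_bot] at hxz
    exact absurd hxz hx
  · have heq : Subgroup.zpowers x = Subgroup.zpowers z :=
      zpowers_eq_of_le_of_orderOf_le (Subgroup.zpowers_le.2 hxz)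
        (by rw [hpe x hx, hpe z hz1])
    rw [heq]
    exact Subgroup.mem_zpowers z

lemma gDeg_prime_exp {p : ℕ} (hpeq : Monoid.exponent G = p)
    (hpe : ∀ x : G, x ≠ 1 → orderOf x = p) {x : G} (hx : x ≠ 1) :
    gDeg (powerGraph G) x = p - 1 := by
  have hsub : Cset x ⊆ (Subgroup.zpowers x : Set G) :=
    Cset_subset_of_prime_exp (fun z hz => by rw [hpe z hz, hpeq]) hx
  rw [gDeg_formula, Set.union_eq_self_of_subset_right hsub, ncard_zpowers, hpe x hx]

lemma reach_one_of_small_cut {p : ℕ} (hp : 2 ≤ p)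
    {x : G} (hx : x ≠ 1) (horder : orderOf x = p)
    {S : Set (Sym2 G)} (hS : S.ncard ≤ p - 2) :
    ((powerGraph G).deleteEdges S).Reachable x 1 := by
  classical
  set B : Set G := {c | c ∈ (Subgroup.zpowers x : Set G) \ {x} ∧
    (s(x, c) ∈ S ∨ (c ≠ 1 ∧ s(c, 1) ∈ S))} with hB
  have hinj : Set.InjOn (fun c => if s(x, c) ∈ S then s(x, c) else s(c, (1:G))) B := by
    intro c1 hc1 c2 hc2 h
    simp only at h
    have hc1x : c1 ≠ x := by
      intro he; exact hc1.1.2 (by rw [he]; rfl)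
    have hc2x : c2 ≠ x := by
      intro he; exact hc2.1.2 (by rw [he]; rfl)
    split_ifs at h with h1 h2 h2
    · rw [Sym2.eq_iff] at h
      rcases h with ⟨-, h⟩ | ⟨ha, hb⟩
      · exact h
      · exact absurd hb hc1x
    · rw [Sym2.eq_iff] at h
      rcases h with ⟨ha, hb⟩ | ⟨ha, hb⟩
      · exact absurd ha.symm hc2x
      · exact absurd ha hx
    · rw [Sym2.eq_iff] at h
      rcases h with ⟨ha, hb⟩ | ⟨ha, hb⟩
      · exact absurd ha hc1x
      · exact absurd hb.symm hx
    · rw [Sym2.eq_iff] at h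
      rcases h with ⟨h, -⟩ | ⟨ha, hb⟩
      · exact h
      · rcases hc1.2 with hh | hh
        · exact absurd hh h1
        · exact absurd ha hh.1
  have hmaps : ∀ c ∈ B, (fun c => if s(x, c) ∈ S then s(x, c) else s(c, (1:G))) c ∈ S := by
    intro c hc
    simp only
    split_ifs with h1
    · exact h1
    · rcases hc.2 with hh | hh
      · exact absurd hh h1
      · exact hh.2
  have hBcard : B.ncard ≤ S.ncard :=
    Set.ncard_le_ncard_of_injOn _ hmaps hinj (Set.toFinite _)
  have hZcard : ((Subgroup.zpowers x : Set G) \ {x}).ncard = p - 1 := by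
    rw [Set.ncard_diff_singleton_of_mem (Subgroup.mem_zpowers x),
      ncard_zpowers, horder]
  have hBsub : B ⊆ (Subgroup.zpowers x : Set G) \ {x} := fun c hc => hc.1
  have hex : ∃ c, c ∈ ((Subgroup.zpowers x : Set G) \ {x}) ∧ c ∉ B := by
    by_contra h
    push_neg at h
    have hle : ((Subgroup.zpowers x : Set G) \ {x}).ncard ≤ B.ncard :=
      Set.ncard_le_ncard (fun c hc => h c hc) (Set.toFinite _)
    omega
  obtain ⟨c, ⟨hcz, hcx⟩, hcB⟩ := hex
  have hcx' : c ≠ x := fun h => hcx (by rw [h]; rfl)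
  have hnb : s(x, c) ∉ S ∧ (c ≠ 1 → s(c, (1:G)) ∉ S) := by
    by_contra h
    push_neg at h
    apply hcB
    refine ⟨⟨hcz, hcx⟩, ?_⟩
    by_cases h1 : s(x, c) ∈ S
    · exact Or.inl h1
    · obtain ⟨hc1, hcS⟩ := h h1
      exact Or.inr ⟨hc1, hcS⟩
  have hadj1 : ((powerGraph G).deleteEdges S).Adj x c := by
    rw [SimpleGraph.deleteEdges_adj]
    exact ⟨pg_adj.2 ⟨fun h => hcx' h.symm, Or.inl hcz⟩, hnb.1⟩
  by_cases hc1 : c = 1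
  · subst hc1
    exact hadj1.reachable
  · have hadj2 : ((powerGraph G).deleteEdges S).Adj c 1 := by
      rw [SimpleGraph.deleteEdges_adj]
      refine ⟨pg_adj.2 ⟨hc1, Or.inl (Subgroup.one_mem _)⟩, hnb.2 hc1⟩
    exact hadj1.reachable.trans hadj2.reachable

lemma connected_of_small_cut {p : ℕ} (hp : 2 ≤ p)
    (hpe : ∀ x : G, x ≠ 1 → orderOf x = p)
    {S : Set (Sym2 G)} (hS : S.ncard ≤ p - 2) :
    ((powerGraph G).deleteEdges S).Connected := by
  have hr : ∀ x : G, ((powerGraph G).deleteEdges S).Reachable x 1 := by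
    intro x
    by_cases hx : x = 1
    · subst hx; exact SimpleGraph.Reachable.refl 1
    · exact reach_one_of_small_cut hp hx (hpe x hx) hS
  exact ⟨fun a b => (hr a).trans (hr b).symm⟩

end Forward
section Forward2
variable {G : Type*} [Group G] [Fintype G]

lemma edgeConn_pg [Nontrivial G] {p : ℕ} (hp2 : 2 ≤ p)
    (hpe : ∀ x : G, x ≠ 1 → orderOf x = p)
    (hdeg : ∀ x : G, x ≠ 1 → gDeg (powerGraph G) x = p - 1) :
    edgeConn (powerGraph G) = p - 1 := by
  obtain ⟨x0, hx0⟩ := exists_ne (1 : G)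
  have hle : edgeConn (powerGraph G) ≤ p - 1 := by
    have := edgeConn_le_gDeg_s1 (powerGraph G) x0 1 (Ne.symm hx0)
    rwa [hdeg x0 hx0] at this
  obtain ⟨S, hSE, hScard, hSdis⟩ := Nat.sInf_mem (edgeConn_set_nonempty (powerGraph G))
  have hge : ¬ edgeConn (powerGraph G) ≤ p - 2 := by
    intro h
    have hScard' : S.ncard ≤ p - 2 := by
      have h2 : S.ncard = edgeConn (powerGraph G) := hScard
      omega
    exact hSdis (connected_of_small_cut hp2 hpe hScard')
  omega

lemma gDeg_delete_edge {x0 w0 : G} (hadj : (powerGraph G).Adj x0 w0) :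
    gDeg ((powerGraph G).deleteEdges {s(x0, w0)}) x0 = gDeg (powerGraph G) x0 - 1 := by
  have hns : ((powerGraph G).deleteEdges {s(x0, w0)}).neighborSet x0 =
      (powerGraph G).neighborSet x0 \ {w0} := by
    ext z
    simp only [SimpleGraph.mem_neighborSet, SimpleGraph.deleteEdges_adj, Set.mem_diff,
      Set.mem_singleton_iff]
    constructor
    · rintro ⟨h1, h2⟩
      refine ⟨h1, fun h => h2 ?_⟩
      rw [h]
    · rintro ⟨h1, h2⟩
      refine ⟨h1, fun h => ?_⟩
      rw [Sym2.eq_iff] at h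
      rcases h with ⟨-, h⟩ | ⟨ha, hb⟩
      · exact h2 h
      · exact hadj.ne ha
  unfold gDeg
  rw [hns, Set.ncard_diff_singleton_of_mem
    (show w0 ∈ (powerGraph G).neighborSet x0 from hadj)]

lemma edgeConn_pg_delete [Nontrivial G] {p : ℕ} (hp2 : 2 ≤ p)
    (hpe : ∀ x : G, x ≠ 1 → orderOf x = p)
    (hdeg : ∀ x : G, x ≠ 1 → gDeg (powerGraph G) x = p - 1)
    {ε : Sym2 G} (hε : ε ∈ (powerGraph G).edgeSet) :
    edgeConn ((powerGraph G).deleteEdges {ε}) = p - 2 := by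
  -- find endpoints with x0 ≠ 1
  obtain ⟨x0, w0, hx0, hadj, hεeq⟩ : ∃ x0 w0 : G, x0 ≠ 1 ∧ (powerGraph G).Adj x0 w0 ∧
      ε = s(x0, w0) := by
    induction ε using Sym2.ind with
    | _ u v =>
      have hadj : (powerGraph G).Adj u v := hε
      by_cases hu : u = 1
      · have hv : v ≠ 1 := by
          intro h; exact hadj.ne (by rw [hu, h])
        exact ⟨v, u, hv, hadj.symm, Sym2.eq_swap⟩
      · exact ⟨u, v, hu, hadj, rfl⟩
    
  have hle : edgeConn ((powerGraph G).deleteEdges {ε}) ≤ p - 2 := by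
    have h1 := edgeConn_le_gDeg_s1 ((powerGraph G).deleteEdges {ε}) x0 1 (Ne.symm hx0)
    rw [hεeq] at h1 ⊢
    rwa [gDeg_delete_edge hadj, hdeg x0 hx0] at h1
  obtain ⟨S, hSE, hScard, hSdis⟩ :=
    Nat.sInf_mem (edgeConn_set_nonempty ((powerGraph G).deleteEdges {ε}))
  have hge : ¬ edgeConn ((powerGraph G).deleteEdges {ε}) + 1 ≤ p - 2 := by
    intro h
    have hScard' : S.ncard = edgeConn ((powerGraph G).deleteEdges {ε}) := hScard
    have hcard2 : ({ε} ∪ S : Set (Sym2 G)).ncard ≤ p - 2 := by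
      rw [Set.union_comm, Set.union_singleton]
      have := Set.ncard_insert_le ε S
      omega
    apply hSdis
    rw [SimpleGraph.deleteEdges_deleteEdges]
    exact connected_of_small_cut hp2 hpe hcard2
  omega

theorem forward_dir (hnc : ¬ IsCyclic G) (hp : (Monoid.exponent G).Prime) :
    powerGraph G ≠ ⊤ ∧ MinEdgeConnected (powerGraph G) := by
  haveI : Nontrivial G := by
    rcases subsingleton_or_nontrivial G with h | h
    · exfalso
      have h1 : Monoid.exponent G ∣ 1 :=
        Monoid.exponent_dvd_of_forall_pow_eq_one (fun g => Subsingleton.elim _ _)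
      exact hp.ne_one (Nat.dvd_one.1 h1)
    · exact h
  have hpe : ∀ x : G, x ≠ 1 → orderOf x = Monoid.exponent G := by
    intro x hx
    have h1 : orderOf x ∣ Monoid.exponent G := Monoid.order_dvd_exponent x
    rcases Nat.Prime.eq_one_or_self_of_dvd hp _ h1 with h | h
    · exact absurd (orderOf_eq_one_iff.1 h) hx
    · exact h
  have hp2 : 2 ≤ Monoid.exponent G := hp.two_le
  have hdeg : ∀ x : G, x ≠ 1 → gDeg (powerGraph G) x = Monoid.exponent G - 1 :=
    fun x hx => gDeg_prime_exp rfl hpe hx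
  constructor
  · obtain ⟨x, hx⟩ := exists_ne (1 : G)
    have hy : ∃ y : G, y ∉ Subgroup.zpowers x := by
      by_contra h
      push_neg at h
      exact hnc ⟨⟨x, h⟩⟩
    obtain ⟨y, hy⟩ := hy
    have hy1 : y ≠ 1 := fun h => hy (h ▸ Subgroup.one_mem _)
    have hyx : x ≠ y := fun h => hy (h ▸ Subgroup.mem_zpowers x)
    have hnadj : ¬ (powerGraph G).Adj x y := by
      rw [pg_adj]
      rintro ⟨-, h | h⟩
      · exact hy h
      · have heq := zpowers_eq_of_le_of_orderOf_le (Subgroup.zpowers_le.2 h)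
          (by rw [hpe x hx, hpe y hy1])
        apply hy
        rw [heq]
        exact Subgroup.mem_zpowers y
    intro htop
    rw [htop] at hnadj
    exact hnadj ((SimpleGraph.top_adj x y).2 hyx)
  · intro e he
    rw [edgeConn_pg_delete hp2 hpe hdeg he, edgeConn_pg hp2 hpe hdeg]
    omega

end Forward2

/-- A finite group `G` is a non-cyclic group of prime exponent iff its
power graph is non-complete and minimally edge connected. -/
theorem stmt_1 (G : Type*) [Group G] [Fintype G] :
    (¬ IsCyclic G ∧ (Monoid.exponent G).Prime) ↔
      (powerGraph G ≠ ⊤ ∧ MinEdgeConnected (powerGraph G)) := by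
  constructor
  · rintro ⟨hnc, hp⟩
    exact forward_dir hnc hp
  · rintro ⟨hne, hmin⟩
    haveI : Nontrivial G := by
      rcases subsingleton_or_nontrivial G with h | h
      · exfalso
        apply hne
        ext x y
        constructor
        · intro hadj; exact absurd (Subsingleton.elim x y) hadj.ne
        · intro hadj; exact absurd (Subsingleton.elim x y) hadj.ne
      · exact h
    obtain ⟨u, v, huv, hnadj⟩ : ∃ u v : G, u ≠ v ∧ ¬ (powerGraph G).Adj u v := by
      by_contra h
      push_neg at h
      apply hne
      ext x y
      constructor
      · intro hadj; exact (SimpleGraph.top_adj x y).2 hadj.ne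
      · intro hadj; exact h x y ((SimpleGraph.top_adj x y).1 hadj)
    have hreg : ∀ x : G, x ≠ 1 → gDeg (powerGraph G) x = minDeg (powerGraph G) :=
      fun x hx => deg_eq_min_of_minEdgeConnected hmin hx
    exact backward_group hreg huv hnadj
end

section
/- Let G be a finite non-cyclic group. Then the enhanced power graph P_E(G) is minimally edge connected if and only if any two maximal cyclic subgroups of G have the same order and any two distinct maximal cyclic subgroups of G intersect only in the identity element. -/
/-- A subgroup is a maximal cyclic subgroup if it is cyclic (generated by one
element) and is not properly contained in any cyclic subgroup. -/
def IsMaxCyclic {G : Type*} [Group G] (H : Subgroup G) : Prop :=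
  (∃ g : G, H = Subgroup.zpowers g) ∧
    ∀ K : Subgroup G, (∃ g : G, K = Subgroup.zpowers g) → H ≤ K → K = H

/-! ### Auxiliary graph-theoretic lemmas -/

open SimpleGraph

section GraphLemmas

variable {V : Type*}

lemma exists_cut_side (Γ : SimpleGraph V) (u : V) (T : Set (Sym2 V))
    (h : ¬ (Γ.deleteEdges T).Connected) :
    ∃ B : Set V, B.Nonempty ∧ u ∉ B ∧
      ∀ b ∈ B, ∀ a ∉ B, Γ.Adj b a → s(b, a) ∈ T := by
  classical
  set Γ' := Γ.deleteEdges T with hΓ'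
  refine ⟨{v | ¬ Γ'.Reachable u v}, ?_, fun hu => hu (Reachable.refl u), ?_⟩
  · by_contra hemp
    rw [Set.not_nonempty_iff_eq_empty] at hemp
    apply h
    have hreach : ∀ v, Γ'.Reachable u v := by
      intro v
      by_contra hv
      have : v ∈ {v | ¬ Γ'.Reachable u v} := hv
      rw [hemp] at this
      exact this
    haveI : Nonempty V := ⟨u⟩
    exact ⟨fun v w => (hreach v).symm.trans (hreach w)⟩
  · intro b hb a ha hadj
    by_contra hT
    have : Γ'.Adj a b := SimpleGraph.deleteEdges_adj.mpr ⟨hadj.symm, by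
      rwa [Sym2.eq_swap]⟩
    simp only [Set.mem_setOf_eq, not_not] at ha
    exact hb (ha.trans this.reachable)

lemma isolate_not_connected (Γ : SimpleGraph V) (x u : V) (hxu : x ≠ u) :
    ¬ (Γ.deleteEdges (Γ.incidenceSet x)).Connected := by
  intro hc
  obtain ⟨w⟩ := hc.preconnected x u
  cases w with
  | nil => exact hxu rfl
  | cons h p =>
    rw [SimpleGraph.deleteEdges_adj] at h
    exact h.2 ((Γ.mem_incidenceSet x _).mpr h.1)

lemma incidenceSet_ncard (Γ : SimpleGraph V) (x : V) :
    (Γ.incidenceSet x).ncard = gDeg Γ x := by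
  classical
  rw [gDeg, ← Nat.card_coe_set_eq, ← Nat.card_coe_set_eq]
  exact Nat.card_congr (Γ.incidenceSetEquivNeighborSet x)

lemma cut_count [Fintype V] (Γ : SimpleGraph V) (u : V) (T : Set (Sym2 V))
    (huniv : ∀ v, v ≠ u → Γ.Adj u v) (B : Set V) (hB : B.Nonempty) (huB : u ∉ B)
    (hcross : ∀ b ∈ B, ∀ a ∉ B, Γ.Adj b a → s(b, a) ∈ T)
    (δ : ℕ) (hdeg : ∀ v, δ ≤ gDeg Γ v) :
    δ ≤ T.ncard ∧ ∀ y ∈ B, δ + 1 ≤ gDeg Γ y → δ + 1 ≤ T.ncard := by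
  classical
  set B' : Finset V := B.toFinite.toFinset with hB'
  have hmemB' : ∀ v, v ∈ B' ↔ v ∈ B := fun v => B.toFinite.mem_toFinset
  set T' : Finset (Sym2 V) := T.toFinite.toFinset with hT'
  have hmemT' : ∀ e, e ∈ T' ↔ e ∈ T := fun e => T.toFinite.mem_toFinset
  have hTcard : T.ncard = T'.card := Set.ncard_eq_toFinset_card _ _
  set k : ℕ := B'.card with hk
  have hk1 : 1 ≤ k := by
    obtain ⟨b, hb⟩ := hB
    exact Finset.card_pos.mpr ⟨b, (hmemB' b).mpr hb⟩
  have hkT : k ≤ T'.card := by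
    apply Finset.card_le_card_of_injOn (fun b => s(b, u))
    · intro b hb
      rw [Finset.mem_coe, hmemT']
      have hbB : b ∈ B := (hmemB' b).mp hb
      have hbu : b ≠ u := fun h => huB (h ▸ hbB)
      exact hcross b hbB u huB (huniv b hbu).symm
    · intro a ha b hb hab
      rcases Sym2.eq_iff.mp hab with ⟨h1, _⟩ | ⟨h1, h2⟩
      · exact h1
      · exfalso
        rw [h1] at ha
        exact huB ((hmemB' _).mp (Finset.mem_coe.mp ha))
  set N' : V → Finset V := fun b => (Γ.neighborSet b).toFinite.toFinset \ B' with hN'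
  have hNmem : ∀ b v, v ∈ N' b ↔ Γ.Adj b v ∧ v ∉ B := by
    intro b v
    simp only [hN', Finset.mem_sdiff, Set.Finite.mem_toFinset, mem_neighborSet, hmemB' v]
  set C : V → Finset (Sym2 V) := fun b => (N' b).image (fun a => s(b, a)) with hC
  have hCsub : ∀ b ∈ B', C b ⊆ T' := by
    intro b hb e he
    obtain ⟨a, ha, rfl⟩ := Finset.mem_image.mp he
    obtain ⟨hadj, haB⟩ := (hNmem b a).mp ha
    rw [hmemT']
    exact hcross b ((hmemB' b).mp hb) a haB hadj
  have hCcard : ∀ b, (C b).card = (N' b).card := by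
    intro b
    apply Finset.card_image_of_injOn
    intro a _ a' _ h
    exact Sym2.congr_right.mp h
  have hCdisj : ∀ b ∈ B', ∀ b' ∈ B', b ≠ b' → Disjoint (C b) (C b') := by
    intro b hb b' hb' hne
    rw [Finset.disjoint_left]
    intro e he he'
    obtain ⟨a, ha, rfl⟩ := Finset.mem_image.mp he
    obtain ⟨a', ha', heq⟩ := Finset.mem_image.mp he'
    have haB2 : a ∉ B := ((hNmem b a).mp ha).2
    have haB2' : a' ∉ B := ((hNmem b' a').mp ha').2
    rcases Sym2.eq_iff.mp heq with ⟨h1, _⟩ | ⟨h1, h2⟩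
    · exact hne h1.symm
    · exact haB2' (h2.symm ▸ (hmemB' b).mp hb)
  have hsum : ∑ b ∈ B', (N' b).card ≤ T'.card := by
    calc ∑ b ∈ B', (N' b).card = ∑ b ∈ B', (C b).card := by
          simp only [hCcard]
      _ = (B'.biUnion C).card := (Finset.card_biUnion hCdisj).symm
      _ ≤ T'.card := Finset.card_le_card (by
          intro e he
          obtain ⟨b, hb, hbe⟩ := Finset.mem_biUnion.mp he
          exact hCsub b hb hbe)
  have hterm : ∀ b ∈ B', gDeg Γ b + 1 ≤ (N' b).card + k := by
    intro b hb
    have hdegb : gDeg Γ b = ((Γ.neighborSet b).toFinite.toFinset).card :=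
      Set.ncard_eq_toFinset_card _ _
    have hsub : (Γ.neighborSet b).toFinite.toFinset ⊆ N' b ∪ B'.erase b := by
      intro v hv
      rw [Finset.mem_union, hNmem]
      have hadj : Γ.Adj b v := by
        rw [Set.Finite.mem_toFinset] at hv; exact hv
      by_cases hvB : v ∈ B
      · right
        exact Finset.mem_erase.mpr ⟨fun h => (h ▸ hadj).ne rfl, (hmemB' v).mpr hvB⟩
      · left; exact ⟨hadj, hvB⟩
    have := Finset.card_le_card hsub
    have hu := Finset.card_union_le (N' b) (B'.erase b)
    have he : (B'.erase b).card = k - 1 := Finset.card_erase_of_mem hb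
    omega
  constructor
  · by_cases hkδ : δ < k
    · omega
    · push_neg at hkδ
      have hge : ∀ b ∈ B', δ + 1 ≤ (N' b).card + k := by
        intro b hb
        have := hterm b hb
        have := hdeg b
        omega
      have hsum2 : k • (δ + 1) ≤ ∑ b ∈ B', ((N' b).card + k) :=
        Finset.card_nsmul_le_sum B' _ _ hge
      rw [Finset.sum_add_distrib, Finset.sum_const] at hsum2
      have h1 : k * (δ + 1) ≤ (∑ b ∈ B', (N' b).card) + k * k := by
        simpa [smul_eq_mul, mul_comm] using hsum2
      have h2 : (∑ b ∈ B', (N' b).card) ≤ T.ncard := by omega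
      nlinarith [h1, h2, hk1, hkδ]
  · intro y hyB hydeg
    by_cases hkδ : δ + 1 ≤ k
    · omega
    · push_neg at hkδ
      have hkδ' : k ≤ δ := by omega
      have hy' : y ∈ B' := (hmemB' y).mpr hyB
      have hge : ∀ b ∈ B'.erase y, δ + 1 ≤ (N' b).card + k := by
        intro b hb
        have hb' := Finset.mem_of_mem_erase hb
        have := hterm b hb'
        have := hdeg b
        omega
      have hsum2 : (B'.erase y).card • (δ + 1) ≤ ∑ b ∈ B'.erase y, ((N' b).card + k) :=
        Finset.card_nsmul_le_sum _ _ _ hge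
      have hcards : (B'.erase y).card = k - 1 := Finset.card_erase_of_mem hy'
      have hyterm : δ + 2 ≤ (N' y).card + k := by
        have := hterm y hy'
        omega
      have htot : ∑ b ∈ B'.erase y, ((N' b).card + k) + ((N' y).card + k)
          = ∑ b ∈ B', ((N' b).card + k) := Finset.sum_erase_add B' _ hy'
      have hsplit : ∑ b ∈ B', ((N' b).card + k) = (∑ b ∈ B', (N' b).card) + k * k := by
        rw [Finset.sum_add_distrib, Finset.sum_const, smul_eq_mul]
      have h2 : (∑ b ∈ B', (N' b).card) ≤ T.ncard := by omega
      rw [hcards, smul_eq_mul] at hsum2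
      zify [hk1, hkδ'] at *
      nlinarith [hsum2, hyterm, htot, hsplit, h2, hk1, hkδ']

lemma edgeConn_eq (Γ : SimpleGraph V) (δ : ℕ)
    (hub : ∃ S : Set (Sym2 V), S ⊆ Γ.edgeSet ∧ S.ncard = δ ∧ ¬ (Γ.deleteEdges S).Connected)
    (hlb : ∀ S : Set (Sym2 V), S ⊆ Γ.edgeSet → ¬ (Γ.deleteEdges S).Connected → δ ≤ S.ncard) :
    edgeConn Γ = δ := by
  apply le_antisymm
  · exact Nat.sInf_le hub
  · apply le_csInf ⟨δ, hub⟩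
    rintro n ⟨S, hS, rfl, hconn⟩
    exact hlb S hS hconn

lemma isolate_edge_cut (Γ : SimpleGraph V) (x u : V) (hxu : x ≠ u) :
    ∃ S : Set (Sym2 V), S ⊆ Γ.edgeSet ∧ S.ncard = gDeg Γ x ∧
      ¬ (Γ.deleteEdges S).Connected :=
  ⟨Γ.incidenceSet x, Γ.incidenceSet_subset x, incidenceSet_ncard Γ x,
    isolate_not_connected Γ x u hxu⟩

lemma gDeg_deleteEdge_of_not_mem (Γ : SimpleGraph V) (e : Sym2 V) (x : V) (hx : x ∉ e) :
    gDeg (Γ.deleteEdges {e}) x = gDeg Γ x := by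
  unfold gDeg
  congr 1
  ext v
  simp only [mem_neighborSet, SimpleGraph.deleteEdges_adj, Set.mem_singleton_iff]
  constructor
  · exact fun h => h.1
  · intro h
    refine ⟨h, fun hc => hx ?_⟩
    rw [← hc]
    exact Sym2.mem_mk_left x v

lemma gDeg_deleteEdge_endpoint [Fintype V] (Γ : SimpleGraph V) (x y : V) (hadj : Γ.Adj x y) :
    gDeg (Γ.deleteEdges {s(x, y)}) x = gDeg Γ x - 1 := by
  unfold gDeg
  have hset : (Γ.deleteEdges {s(x, y)}).neighborSet x = Γ.neighborSet x \ {y} := by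
    ext v
    simp only [mem_neighborSet, SimpleGraph.deleteEdges_adj, Set.mem_singleton_iff,
      Set.mem_diff]
    constructor
    · rintro ⟨h1, h2⟩
      refine ⟨h1, fun hv => h2 ?_⟩
      rw [hv]
    · rintro ⟨h1, h2⟩
      refine ⟨h1, fun hc => ?_⟩
      rcases Sym2.eq_iff.mp hc with ⟨_, h4⟩ | ⟨h3, _⟩
      · exact h2 h4
      · exact hadj.ne h3
  rw [hset]
  exact Set.ncard_diff_singleton_of_mem hadj

end GraphLemmas

/-! ### Auxiliary group-theoretic lemmas -/

section GroupLemmas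

variable {G : Type*} [Group G]

lemma epg_adj {x y : G} :
    (enhancedPowerGraph G).Adj x y ↔
      x ≠ y ∧ ∃ z : G, x ∈ Subgroup.zpowers z ∧ y ∈ Subgroup.zpowers z := by
  rw [enhancedPowerGraph, SimpleGraph.fromRel_adj]
  constructor
  · rintro ⟨hne, ⟨z, h1, h2⟩ | ⟨z, h1, h2⟩⟩
    · exact ⟨hne, z, h1, h2⟩
    · exact ⟨hne, z, h2, h1⟩
  · rintro ⟨hne, z, h1, h2⟩
    exact ⟨hne, Or.inl ⟨z, h1, h2⟩⟩

lemma epg_adj_one {x : G} (hx : x ≠ 1) : (enhancedPowerGraph G).Adj 1 x :=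
  epg_adj.mpr ⟨fun h => hx h.symm, x, Subgroup.one_mem _, Subgroup.mem_zpowers x⟩

lemma exists_maxCyclic [Fintype G] (x : G) : ∃ M : Subgroup G, IsMaxCyclic M ∧ x ∈ M := by
  classical
  set s : Set (Subgroup G) := {K | (∃ g : G, K = Subgroup.zpowers g) ∧ x ∈ K} with hs
  have hsne : s.Nonempty := ⟨Subgroup.zpowers x, ⟨x, rfl⟩, Subgroup.mem_zpowers x⟩
  obtain ⟨M, hMs, hmax⟩ := Set.Finite.exists_maximalFor (fun K : Subgroup G => Nat.card K)
    s (Set.toFinite s) hsne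
  refine ⟨M, ⟨hMs.1, ?_⟩, hMs.2⟩
  intro K hK hMK
  have hKs : K ∈ s := ⟨hK, hMK hMs.2⟩
  have hcard := le_antisymm (Subgroup.card_le_of_le hMK) (hmax hKs (Subgroup.card_le_of_le hMK))
  exact (Subgroup.eq_of_le_of_card_ge hMK (le_of_eq hcard.symm)).symm

lemma maxCyclic_ne_bot [Nontrivial G] {M : Subgroup G} (hM : IsMaxCyclic M) : M ≠ ⊥ := by
  intro hbot
  obtain ⟨g, hg⟩ := exists_ne (1 : G)
  have := hM.2 (Subgroup.zpowers g) ⟨g, rfl⟩ (hbot ▸ bot_le)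
  have hgM : g ∈ M := this ▸ Subgroup.mem_zpowers g
  rw [hbot, Subgroup.mem_bot] at hgM
  exact hg hgM

lemma gen_ne_one [Nontrivial G] {g : G} (hM : IsMaxCyclic (Subgroup.zpowers g)) : g ≠ 1 := by
  intro h
  apply maxCyclic_ne_bot hM
  rw [h, Subgroup.zpowers_one_eq_bot]

lemma nbhd_gen {g : G} (hM : IsMaxCyclic (Subgroup.zpowers g)) :
    (enhancedPowerGraph G).neighborSet g = (Subgroup.zpowers g : Set G) \ {g} := by
  ext y
  simp only [SimpleGraph.mem_neighborSet, Set.mem_diff, Set.mem_singleton_iff, SetLike.mem_coe]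
  rw [epg_adj]
  constructor
  · rintro ⟨hne, z, hgz, hyz⟩
    have hz := hM.2 (Subgroup.zpowers z) ⟨z, rfl⟩ (Subgroup.zpowers_le.mpr hgz)
    exact ⟨hz ▸ hyz, fun h => hne h.symm⟩
  · rintro ⟨hy, hne⟩
    exact ⟨fun h => hne h.symm, g, Subgroup.mem_zpowers g, hy⟩

lemma subset_nbhd {g x : G} (hx : x ∈ Subgroup.zpowers g) :
    (Subgroup.zpowers g : Set G) \ {x} ⊆ (enhancedPowerGraph G).neighborSet x := by
  rintro y ⟨hy, hne⟩
  exact epg_adj.mpr ⟨fun h => (hne : y ≠ x) h.symm, g, hx, hy⟩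

lemma gDeg_gen [Fintype G] {g : G} (hM : IsMaxCyclic (Subgroup.zpowers g)) :
    gDeg (enhancedPowerGraph G) g = Nat.card (Subgroup.zpowers g) - 1 := by
  rw [gDeg, nbhd_gen hM, Set.ncard_diff_singleton_of_mem (Subgroup.mem_zpowers g),
    ← Nat.card_coe_set_eq]
  rfl

lemma deg_of_cond [Fintype G]
    (hcond : ∀ M N : Subgroup G, IsMaxCyclic M → IsMaxCyclic N →
      Nat.card M = Nat.card N ∧ (M ≠ N → M ⊓ N = ⊥))
    {M₀ : Subgroup G} (hM₀ : IsMaxCyclic M₀) {x : G} (hx : x ≠ 1) :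
    gDeg (enhancedPowerGraph G) x = Nat.card M₀ - 1 := by
  obtain ⟨M, hM, hxM⟩ := exists_maxCyclic x
  obtain ⟨g, hMg⟩ := hM.1
  have hxg : x ∈ Subgroup.zpowers g := hMg ▸ hxM
  have hset : (enhancedPowerGraph G).neighborSet x = (M : Set G) \ {x} := by
    apply Set.Subset.antisymm
    · intro y hy
      rw [SimpleGraph.mem_neighborSet, epg_adj] at hy
      obtain ⟨hne, z, hxz, hyz⟩ := hy
      obtain ⟨M', hM', hzM'⟩ := exists_maxCyclic z
      have hzle : Subgroup.zpowers z ≤ M' := Subgroup.zpowers_le.mpr hzM'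
      have hxM' : x ∈ M' := hzle hxz
      have hMM' : M' = M := by
        by_contra hne'
        have hbot := (hcond M M' hM hM').2 (fun h => hne' h.symm)
        have hxbot : x ∈ M ⊓ M' := ⟨hxM, hxM'⟩
        rw [hbot] at hxbot
        exact hx (Subgroup.mem_bot.mp hxbot)
      refine ⟨SetLike.mem_coe.mpr (hMM' ▸ hzle hyz), ?_⟩
      simp only [Set.mem_singleton_iff]
      exact fun h => hne h.symm
    · rw [hMg]
      exact subset_nbhd hxg
  rw [gDeg, hset, Set.ncard_diff_singleton_of_mem (SetLike.mem_coe.mpr hxM),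
    ← Nat.card_coe_set_eq, SetLike.coe_sort_coe, (hcond M M₀ hM hM₀).1]

end GroupLemmas

/-- For a finite non-cyclic group `G`, the enhanced power graph is
minimally edge connected iff any two maximal cyclic subgroups have the same order
and any two distinct ones intersect trivially. -/
theorem stmt_2 (G : Type*) [Group G] [Fintype G] (hnc : ¬ IsCyclic G) :
    MinEdgeConnected (enhancedPowerGraph G) ↔
      ∀ M N : Subgroup G, IsMaxCyclic M → IsMaxCyclic N →
        Nat.card M = Nat.card N ∧ (M ≠ N → M ⊓ N = ⊥) := by
  classical
  have hnt : Nontrivial G := by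
    by_contra h
    rw [not_nontrivial_iff_subsingleton] at h
    exact hnc ⟨⟨1, fun x => by
      rw [Subsingleton.elim x (1 : G)]; exact Subgroup.mem_zpowers 1⟩⟩
  set Γ := enhancedPowerGraph G with hΓ
  have huniv : ∀ v : G, v ≠ (1 : G) → Γ.Adj 1 v := fun v hv => epg_adj_one hv
  constructor
  · -- forward direction
    intro hMEC M N hM hN
    by_contra hbad
    set δ := minDeg Γ with hδdef
    have hδle : ∀ v, δ ≤ gDeg Γ v := fun v => Nat.sInf_le ⟨v, rfl⟩
    -- produce a non-identity vertex of degree > δ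
    have hbig : ∃ y : G, y ≠ 1 ∧ δ + 1 ≤ gDeg Γ y := by
      rcases not_and_or.mp hbad with hP | hQ
      · -- different orders
        obtain ⟨g, hMg⟩ := hM.1
        obtain ⟨h, hNh⟩ := hN.1
        rw [hMg] at hM hP
        rw [hNh] at hN hP
        have hdg := gDeg_gen hM
        have hdh := gDeg_gen hN
        have hcg : 1 ≤ Nat.card (Subgroup.zpowers g) := Nat.card_pos
        have hch : 1 ≤ Nat.card (Subgroup.zpowers h) := Nat.card_pos
        have hne : gDeg Γ g ≠ gDeg Γ h := by
          rw [hdg, hdh]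
          omega
        rcases lt_or_gt_of_ne hne with hlt | hgt
        · exact ⟨h, gen_ne_one hN, by have := hδle g; omega⟩
        · exact ⟨g, gen_ne_one hM, by have := hδle h; omega⟩
      · push_neg at hQ
        obtain ⟨hMN, hint⟩ := hQ
        obtain ⟨a, ha⟩ := Subgroup.ne_bot_iff_exists_ne_one.mp hint
        set x₀ : G := (a : G) with hx₀def
        have hx₀1 : x₀ ≠ 1 := fun h => ha (OneMemClass.coe_eq_one.mp h)
        have hx₀M : x₀ ∈ M := a.2.1
        have hx₀N : x₀ ∈ N := a.2.2
        obtain ⟨g, hMg⟩ := hM.1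
        obtain ⟨h, hNh⟩ := hN.1
        -- there is an element of N outside M
        have hnle : ¬ N ≤ M := by
          intro hle
          exact hMN (hN.2 M hM.1 hle)
        obtain ⟨w, hwN, hwM⟩ := SetLike.not_le_iff_exists.mp hnle
        have hwx₀ : w ≠ x₀ := fun hc => hwM (hc ▸ hx₀M)
        have hsub : insert w ((Subgroup.zpowers g : Set G) \ {x₀}) ⊆ Γ.neighborSet x₀ := by
          apply Set.insert_subset
          · rw [SimpleGraph.mem_neighborSet, epg_adj]
            refine ⟨fun hc => hwx₀ hc.symm, h, ?_, ?_⟩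
            · rw [← hNh]; exact hx₀N
            · rw [← hNh]; exact hwN
          · exact subset_nbhd (by rw [← hMg]; exact hx₀M)
        have hwnot : w ∉ (Subgroup.zpowers g : Set G) \ {x₀} := by
          rintro ⟨hw1, _⟩
          exact hwM (by rw [hMg]; exact hw1)
        have hx₀g : x₀ ∈ (Subgroup.zpowers g : Set G) := by
          rw [← hMg]; exact hx₀M
        have hcard1 : ((Subgroup.zpowers g : Set G) \ {x₀}).ncard
            = Nat.card (Subgroup.zpowers g) - 1 := by
          rw [Set.ncard_diff_singleton_of_mem hx₀g, ← Nat.card_coe_set_eq]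
          rfl
        have hcard2 : (insert w ((Subgroup.zpowers g : Set G) \ {x₀})).ncard
            = Nat.card (Subgroup.zpowers g) - 1 + 1 :=
          by rw [Set.ncard_insert_of_notMem hwnot, hcard1]
        have hdegx₀ : Nat.card (Subgroup.zpowers g) ≤ gDeg Γ x₀ := by
          have hle := Set.ncard_le_ncard hsub (Set.toFinite _)
          have hcg : 1 ≤ Nat.card (Subgroup.zpowers g) := Nat.card_pos
          rw [hcard2] at hle
          unfold gDeg
          omega
        have hdg : gDeg Γ g = Nat.card (Subgroup.zpowers g) - 1 :=
          gDeg_gen (by rw [← hMg]; exact hM)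
        have hcg : 1 ≤ Nat.card (Subgroup.zpowers g) := Nat.card_pos
        refine ⟨x₀, hx₀1, ?_⟩
        have := hδle g
        omega
    obtain ⟨y, hy1, hybig⟩ := hbig
    -- minimum degree is attained at some vertex
    obtain ⟨x₀, hx₀⟩ : ∃ x₀ : G, gDeg Γ x₀ = δ := by
      have : δ ∈ Set.range (gDeg Γ) := Nat.sInf_mem (Set.range_nonempty _)
      exact this
    have hdeg1big : gDeg Γ y ≤ gDeg Γ 1 := by
      have h1 : Γ.neighborSet 1 = Set.univ \ {1} := by
        ext v
        simp only [SimpleGraph.mem_neighborSet, Set.mem_diff, Set.mem_univ, true_and,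
          Set.mem_singleton_iff]
        constructor
        · exact fun h => h.ne'
        · exact fun h => huniv v h
      have h2 : Γ.neighborSet y ⊆ Set.univ \ {y} := by
        intro v hv
        exact ⟨Set.mem_univ v, fun hc => Γ.loopless.irrefl y (by
          rw [Set.mem_singleton_iff] at hc
          rw [← hc] at hv ⊢
          exact hv)⟩
      have e1 : (Set.univ \ {(1 : G)}).ncard = Fintype.card G - 1 := by
        rw [Set.ncard_diff_singleton_of_mem (Set.mem_univ _), Set.ncard_univ, Nat.card_eq_fintype_card]
      have e2 : (Set.univ \ {y}).ncard = Fintype.card G - 1 := by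
        rw [Set.ncard_diff_singleton_of_mem (Set.mem_univ _), Set.ncard_univ, Nat.card_eq_fintype_card]
      have := Set.ncard_le_ncard h2 (Set.toFinite _)
      unfold gDeg
      rw [h1, e1]
      omega
    have hx₀1 : x₀ ≠ 1 := by
      intro hc
      rw [hc] at hx₀
      omega
    have hx₀y : x₀ ≠ y := by
      intro hc
      rw [hc] at hx₀
      omega
    have hδ1 : 1 ≤ δ := by
      have h1mem : (1 : G) ∈ Γ.neighborSet x₀ := (huniv x₀ hx₀1).symm
      have : 0 < (Γ.neighborSet x₀).ncard :=
        (Set.ncard_pos (Set.toFinite _)).mpr ⟨1, h1mem⟩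
      have : 0 < gDeg Γ x₀ := this
      omega
    set e : Sym2 G := s((1 : G), y) with hedef
    have he : e ∈ Γ.edgeSet := (Γ.mem_edgeSet).mpr (huniv y hy1)
    have hx₀e : x₀ ∉ e := by
      rw [hedef, Sym2.mem_iff]
      push_neg
      exact ⟨hx₀1, hx₀y⟩
    -- edgeConn Γ = δ
    have hECΓ : edgeConn Γ = δ := by
      apply edgeConn_eq
      · obtain ⟨S, h1, h2, h3⟩ := isolate_edge_cut Γ x₀ 1 hx₀1
        exact ⟨S, h1, by rw [h2, hx₀], h3⟩
      · intro S hS hconn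
        obtain ⟨B, hB, h1B, hcross⟩ := exists_cut_side Γ 1 S hconn
        exact (cut_count Γ 1 S huniv B hB h1B hcross δ hδle).1
    -- edgeConn (Γ - e) = δ
    have hECe : edgeConn (Γ.deleteEdges {e}) = δ := by
      apply edgeConn_eq
      · obtain ⟨S, h1, h2, h3⟩ := isolate_edge_cut (Γ.deleteEdges {e}) x₀ 1 hx₀1
        refine ⟨S, h1, ?_, h3⟩
        rw [h2, gDeg_deleteEdge_of_not_mem Γ e x₀ hx₀e, hx₀]
      · intro S hS hconn
        rw [SimpleGraph.deleteEdges_deleteEdges, Set.singleton_union] at hconn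
        obtain ⟨B, hB, h1B, hcross⟩ := exists_cut_side Γ 1 _ hconn
        by_cases hyB : y ∈ B
        · have hres := (cut_count Γ 1 _ huniv B hB h1B hcross δ hδle).2 y hyB hybig
          have := Set.ncard_insert_le e S
          omega
        · have hcross' : ∀ b ∈ B, ∀ a ∉ B, Γ.Adj b a → s(b, a) ∈ S := by
            intro b hb a ha hadj
            rcases Set.mem_insert_iff.mp (hcross b hb a ha hadj) with heq | hS'
            · exfalso
              rw [hedef] at heq
              rcases Sym2.eq_iff.mp heq with ⟨h1', _⟩ | ⟨h1', h2'⟩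
              · exact h1B (h1' ▸ hb)
              · exact hyB (h1' ▸ hb)
            · exact hS'
          exact (cut_count Γ 1 S huniv B hB h1B hcross' δ hδle).1
    have := hMEC e he
    rw [hECe, hECΓ] at this
    omega
  · -- backward direction
    intro hcond
    obtain ⟨M₀, hM₀, h1M₀⟩ := exists_maxCyclic (1 : G)
    set n := Nat.card M₀ with hndef
    have hn2 : 2 ≤ n := by
      have := (Subgroup.one_lt_card_iff_ne_bot M₀).mpr (maxCyclic_ne_bot hM₀)
      omega
    have hdegx : ∀ x : G, x ≠ 1 → gDeg Γ x = n - 1 := fun x hx => deg_of_cond hcond hM₀ hx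
    have hdeg : ∀ v : G, n - 1 ≤ gDeg Γ v := by
      intro v
      by_cases hv : v = 1
      · subst hv
        obtain ⟨g₀, hg₀⟩ := hM₀.1
        have h1g₀ : (1 : G) ∈ Subgroup.zpowers g₀ := Subgroup.one_mem _
        have hsub : (Subgroup.zpowers g₀ : Set G) \ {1} ⊆ Γ.neighborSet 1 :=
          subset_nbhd h1g₀
        have hcard : ((Subgroup.zpowers g₀ : Set G) \ {1}).ncard = n - 1 := by
          rw [Set.ncard_diff_singleton_of_mem h1g₀, ← Nat.card_coe_set_eq,
            SetLike.coe_sort_coe, ← hg₀]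
        have := Set.ncard_le_ncard hsub (Set.toFinite _)
        unfold gDeg
        omega
      · rw [hdegx v hv]
    -- the edge connectivity of Γ
    have hECΓ : edgeConn Γ = n - 1 := by
      apply edgeConn_eq
      · obtain ⟨x₁, hx₁⟩ := exists_ne (1 : G)
        obtain ⟨S, h1, h2, h3⟩ := isolate_edge_cut Γ x₁ 1 hx₁
        exact ⟨S, h1, by rw [h2, hdegx x₁ hx₁], h3⟩
      · intro S hS hconn
        obtain ⟨B, hB, h1B, hcross⟩ := exists_cut_side Γ 1 S hconn
        exact (cut_count Γ 1 S huniv B hB h1B hcross (n - 1) hdeg).1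
    -- deleting any edge drops it by one
    have key : ∀ x y : G, Γ.Adj x y → x ≠ 1 →
        edgeConn (Γ.deleteEdges {s(x, y)}) = n - 2 := by
      intro x y hadj hx1
      apply edgeConn_eq
      · obtain ⟨S, h1, h2, h3⟩ := isolate_edge_cut (Γ.deleteEdges {s(x, y)}) x 1 hx1
        refine ⟨S, h1, ?_, h3⟩
        rw [h2, gDeg_deleteEdge_endpoint Γ x y hadj, hdegx x hx1]
        omega
      · intro S hS hconn
        rw [SimpleGraph.deleteEdges_deleteEdges, Set.singleton_union] at hconn
        obtain ⟨B, hB, h1B, hcross⟩ := exists_cut_side Γ 1 _ hconn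
        have := (cut_count Γ 1 _ huniv B hB h1B hcross (n - 1) hdeg).1
        have := Set.ncard_insert_le (s(x, y)) S
        omega
    intro e he
    rw [hECΓ]
    induction e using Sym2.ind with
    | _ x y =>
      have hadj : Γ.Adj x y := (Γ.mem_edgeSet).mp he
      by_cases hx1 : x = 1
      · subst hx1
        have hy1 : y ≠ 1 := fun h => Γ.loopless.irrefl 1 (h ▸ hadj)
        rw [Sym2.eq_swap, key y 1 hadj.symm hy1]
        omega
      · rw [key x y hadj hx1]
        omega
end
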